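/- arXiv:2108.04502 — 9 statements merged into one kernel-verified Lean document; each statement's English description precedes it below -/
import Mathlib

section
/- Let G = ⟨σ⟩ be a finite cyclic group acting on a finite abelian group M, with filtration M₀ = 1, M_{i+1}/M_i = (M/M_i)^G. Then for all i ≥ 1, the map induced by 1-σ gives an injective homomorphism M_{i+1}/M_i → M_i/M_{i-1}. In particular the orders #(M_{i+1}/M_i) form a decreasing sequence in i, and #(M_{i+1}/M_i) ≤ #M^G for all i. -/
/-- The endomorphism `1 - σ` of an abelian group `M`, for `σ` an automorphism. -/
def oneSubSigma {M : Type*} [AddCommGroup M] (σ : AddAut M) : AddMonoid.End M :=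
  1 - (show AddMonoid.End M from AddEquiv.toAddMonoidHom σ)

/-- For a cyclic group `G = ⟨σ⟩` acting on a finite abelian group `M`, with the filtration
`M_i = ker((1-σ)^i)` (so `M₁ = M^G` and `M_{i+1}/M_i = (M/M_i)^G`), the map induced by
`1 - σ` gives an injective homomorphism `M_{i+1}/M_i → M_i/M_{i-1}` for `i ≥ 1`; in
particular the orders `#(M_{i+1}/M_i)` are decreasing in `i` and bounded by `#M^G`. -/
theorem stmt2 {M : Type*} [AddCommGroup M] [Finite M] (n : ℕ) (hn : 0 < n)
    (σ : AddAut M) (hσ : n • σ = 0)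
    (Mf : ℕ → AddSubgroup M)
    (hMf : ∀ i, Mf i = AddMonoidHom.ker ((oneSubSigma σ) ^ i)) :
    (∀ i, 1 ≤ i →
      ∃ f : (Mf (i + 1) ⧸ (Mf i).addSubgroupOf (Mf (i + 1))) →+
            (Mf i ⧸ (Mf (i - 1)).addSubgroupOf (Mf i)),
        Function.Injective f ∧
        ∀ (x : M) (hx : x ∈ Mf (i + 1)) (hdx : x - σ x ∈ Mf i),
          f (QuotientAddGroup.mk ⟨x, hx⟩) = QuotientAddGroup.mk ⟨x - σ x, hdx⟩) ∧
    (∀ i, 1 ≤ i →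
      Nat.card (Mf (i + 1) ⧸ (Mf i).addSubgroupOf (Mf (i + 1))) ≤
        Nat.card (Mf i ⧸ (Mf (i - 1)).addSubgroupOf (Mf i))) ∧
    (∀ i, Nat.card (Mf (i + 1) ⧸ (Mf i).addSubgroupOf (Mf (i + 1))) ≤
        Nat.card (Mf 1)) := by
  classical
  have hd : ∀ x : M, oneSubSigma σ x = x - σ x := fun x => by
    show x - σ x = x - σ x
    rfl
  -- (1-σ) maps Mf (i+1) into Mf i
  have hmem : ∀ (i : ℕ) (x : M), x ∈ Mf (i + 1) → oneSubSigma σ x ∈ Mf i := by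
    intro i x hx
    rw [hMf] at hx ⊢
    change (oneSubSigma σ ^ (i + 1)) x = 0 at hx
    change (oneSubSigma σ ^ i) (oneSubSigma σ x) = 0
    rw [pow_succ] at hx
    exact hx
  -- if x ∈ Mf (i+1) (automatic) and (1-σ)x ∈ Mf i then x ∈ Mf (i+1)
  have hmem' : ∀ (i : ℕ) (x : M), oneSubSigma σ x ∈ Mf i → x ∈ Mf (i + 1) := by
    intro i x hx
    rw [hMf] at hx ⊢
    change (oneSubSigma σ ^ i) (oneSubSigma σ x) = 0 at hx
    change (oneSubSigma σ ^ (i + 1)) x = 0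
    rw [pow_succ]
    exact hx
  have main : ∀ i, 1 ≤ i →
      ∃ f : (Mf (i + 1) ⧸ (Mf i).addSubgroupOf (Mf (i + 1))) →+
            (Mf i ⧸ (Mf (i - 1)).addSubgroupOf (Mf i)),
        Function.Injective f ∧
        ∀ (x : M) (hx : x ∈ Mf (i + 1)) (hdx : x - σ x ∈ Mf i),
          f (QuotientAddGroup.mk ⟨x, hx⟩) = QuotientAddGroup.mk ⟨x - σ x, hdx⟩ := by
    intro i hi
    obtain ⟨j, rfl⟩ : ∃ j, i = j + 1 := ⟨i - 1, (Nat.succ_pred_eq_of_pos hi).symm⟩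
    have hj : j + 1 - 1 = j := rfl
    rw [hj]
    -- the hom Mf (j+2) →+ Mf (j+1)
    set d0 : Mf (j + 1 + 1) →+ Mf (j + 1) :=
      { toFun := fun x => ⟨oneSubSigma σ x.1, hmem _ _ x.2⟩,
        map_zero' := by ext; simp
        map_add' := fun a b => by ext; simp } with hd0
    set d : Mf (j + 1 + 1) →+ Mf (j + 1) ⧸ (Mf j).addSubgroupOf (Mf (j + 1)) :=
      (QuotientAddGroup.mk' _).comp d0 with hdd
    have hker : (Mf (j + 1)).addSubgroupOf (Mf (j + 1 + 1)) ≤ d.ker := by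
      intro x hx
      rw [AddSubgroup.mem_addSubgroupOf] at hx
      rw [AddMonoidHom.mem_ker, hdd, AddMonoidHom.comp_apply, QuotientAddGroup.mk'_apply,
        QuotientAddGroup.eq_zero_iff, AddSubgroup.mem_addSubgroupOf]
      show oneSubSigma σ x.1 ∈ Mf j
      rw [hMf] at hx ⊢
      change (oneSubSigma σ ^ (j + 1)) x.1 = 0 at hx
      change (oneSubSigma σ ^ j) (oneSubSigma σ x.1) = 0
      rw [pow_succ] at hx
      exact hx
    refine ⟨QuotientAddGroup.lift _ d hker, ?_, ?_⟩
    · rw [injective_iff_map_eq_zero]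
      intro a
      induction a using QuotientAddGroup.induction_on with
      | H x =>
        intro hfx
        rw [QuotientAddGroup.lift_mk'] at hfx
        rw [hdd, AddMonoidHom.comp_apply, QuotientAddGroup.mk'_apply,
          QuotientAddGroup.eq_zero_iff, AddSubgroup.mem_addSubgroupOf] at hfx
        have hx1 : oneSubSigma σ x.1 ∈ Mf j := hfx
        rw [QuotientAddGroup.eq_zero_iff, AddSubgroup.mem_addSubgroupOf]
        exact hmem' j x.1 hx1
    · intro x hx hdx
      rw [QuotientAddGroup.lift_mk']
      rw [hdd, AddMonoidHom.comp_apply, QuotientAddGroup.mk'_apply]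
      exact congrArg _ (Subtype.ext (hd x))
  refine ⟨main, ?_, ?_⟩
  · intro i hi
    obtain ⟨f, hf, -⟩ := main i hi
    exact Nat.card_le_card_of_injective f hf
  · intro i
    induction i with
    | zero =>
      exact Nat.card_le_card_of_surjective _ (QuotientAddGroup.mk'_surjective
        ((Mf 0).addSubgroupOf (Mf (0 + 1))))
    | succ k ih =>
      obtain ⟨f, hf, -⟩ := main (k + 1) (Nat.le_add_left 1 k)
      exact le_trans (Nat.card_le_card_of_injective f hf) ih
end

section
/- Let G = ⟨σ⟩ be a finite cyclic group acting on a finite abelian group M, with filtration M₀ = 1, M_{i+1} = ker((1-σ)^{i+1}), and let n be the least integer with M_n = M. Then #M = ∏_{i=0}^{n-1} #(M_{i+1}/M_i). Moreover, if #M^G = p for a prime p, then #(M_{i+1}/M_i) = p for every 0 ≤ i ≤ n-1, so #M = p^n. -/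
/-- For a cyclic group `G = ⟨σ⟩` acting on a finite abelian group `M`, with filtration
`M_i = ker((1-σ)^i)` and `n` least with `M_n = M`:
`#M = ∏_{i<n} #(M_{i+1}/M_i)`; moreover if `#M^G = p` (p prime), then each
`#(M_{i+1}/M_i) = p` for `i < n`, so `#M = p^n`. -/
theorem stmt3 {M : Type*} [AddCommGroup M] [Finite M] (d : ℕ) (hd : 0 < d)
    (σ : AddAut M) (hσ : d • σ = 0)
    (Mf : ℕ → AddSubgroup M)
    (hMf : ∀ i, Mf i = AddMonoidHom.ker ((oneSubSigma σ) ^ i))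
    (n : ℕ) (hn : Mf n = ⊤) (hmin : ∀ m < n, Mf m ≠ ⊤)
    (p : ℕ) (hp : p.Prime) :
    Nat.card M =
      ∏ i ∈ Finset.range n,
        Nat.card (Mf (i + 1) ⧸ (Mf i).addSubgroupOf (Mf (i + 1))) ∧
    (Nat.card (Mf 1) = p →
      (∀ i < n, Nat.card (Mf (i + 1) ⧸ (Mf i).addSubgroupOf (Mf (i + 1))) = p) ∧
      Nat.card M = p ^ n) := by
  classical
  set τ := oneSubSigma σ with hτdef
  -- membership characterization
  have hmem : ∀ (i : ℕ) (x : M), x ∈ Mf (i + 1) ↔ τ x ∈ Mf i := by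
    intro i x
    rw [hMf, hMf]
    show (τ ^ (i + 1)) x = 0 ↔ (τ ^ i) (τ x) = 0
    rw [pow_succ]
    rfl
  have h0 : Mf 0 = ⊥ := by
    ext x
    rw [hMf]
    show (τ ^ 0) x = 0 ↔ x ∈ ⊥
    rw [pow_zero]
    exact Iff.rfl
  have hmono : ∀ i, Mf i ≤ Mf (i + 1) := by
    intro i x hx
    rw [hMf] at hx ⊢
    change (τ ^ i) x = 0 at hx
    change (τ ^ (i + 1)) x = 0
    rw [pow_succ']
    show τ ((τ ^ i) x) = 0
    rw [hx, map_zero]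
  -- Lagrange step
  have hcard : ∀ i, Nat.card (Mf (i + 1)) =
      Nat.card (Mf (i + 1) ⧸ (Mf i).addSubgroupOf (Mf (i + 1))) * Nat.card (Mf i) := by
    intro i
    rw [AddSubgroup.card_eq_card_quotient_mul_card_addSubgroup
      ((Mf i).addSubgroupOf (Mf (i + 1)))]
    congr 1
    exact Nat.card_congr (AddSubgroup.addSubgroupOfEquivOfLe (hmono i)).toEquiv
  -- telescoping
  have htele : ∀ k, Nat.card (Mf k) =
      ∏ i ∈ Finset.range k,
        Nat.card (Mf (i + 1) ⧸ (Mf i).addSubgroupOf (Mf (i + 1))) := by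
    intro k
    induction k with
    | zero => simp [h0]
    | succ k ih => rw [Finset.prod_range_succ, ← ih, hcard k, mul_comm]
  have hM : Nat.card M =
      ∏ i ∈ Finset.range n,
        Nat.card (Mf (i + 1) ⧸ (Mf i).addSubgroupOf (Mf (i + 1))) := by
    rw [← htele n, hn, AddSubgroup.card_top]
  refine ⟨hM, fun h1 => ?_⟩
  -- strictness of the filtration below n
  have hne : ∀ i < n, Mf i ≠ Mf (i + 1) := by
    intro i hi heq
    have hstab : ∀ j, Mf (i + j) = Mf i := by
      intro j
      induction j with
      | zero => rfl
      | succ j ih =>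
        apply le_antisymm
        · intro x hx
          rw [show i + (j + 1) = (i + j) + 1 from rfl, hmem, ih] at hx
          have hx1 : x ∈ Mf (i + 1) := (hmem i x).mpr hx
          rw [← heq] at hx1
          exact hx1
        · rw [← ih]; exact hmono _
    have : Mf n = Mf i := by
      have := hstab (n - i)
      rwa [Nat.add_sub_cancel' hi.le] at this
    exact hmin i hi (this ▸ hn)
  -- nontriviality of the quotients below n
  have hQne1 : ∀ i < n,
      Nat.card (Mf (i + 1) ⧸ (Mf i).addSubgroupOf (Mf (i + 1))) ≠ 1 := by
    intro i hi h
    apply hne i hi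
    have hc := hcard i
    rw [h, one_mul] at hc
    exact AddSubgroup.eq_of_le_of_card_ge (hmono i) hc.le
  -- divisibility chain
  have hdvd : ∀ i,
      Nat.card (Mf (i + 1 + 1) ⧸ (Mf (i + 1)).addSubgroupOf (Mf (i + 1 + 1))) ∣
      Nat.card (Mf (i + 1) ⧸ (Mf i).addSubgroupOf (Mf (i + 1))) := by
    intro i
    set g : ↥(Mf (i + 2)) →+ ↥(Mf (i + 1)) :=
      AddMonoidHom.codRestrict ((τ : AddMonoid.End M).comp (Mf (i + 2)).subtype)
        (Mf (i + 1)) (fun x => (hmem (i + 1) (x : M)).mp x.2) with hg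
    set f : ↥(Mf (i + 2)) →+
        (Mf (i + 1) ⧸ (Mf i).addSubgroupOf (Mf (i + 1))) :=
      (QuotientAddGroup.mk' _).comp g with hf
    have hker : f.ker = (Mf (i + 1)).addSubgroupOf (Mf (i + 2)) := by
      ext x
      simp only [hf, AddMonoidHom.mem_ker, AddMonoidHom.comp_apply,
        QuotientAddGroup.mk'_apply, QuotientAddGroup.eq_zero_iff,
        AddSubgroup.mem_addSubgroupOf]
      show τ (x : M) ∈ Mf i ↔ (x : M) ∈ Mf (i + 1)
      exact (hmem i (x : M)).symm
    calc Nat.card (Mf (i + 1 + 1) ⧸ (Mf (i + 1)).addSubgroupOf (Mf (i + 1 + 1)))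
        = Nat.card (↥(Mf (i + 2)) ⧸ f.ker) := by rw [hker]
      _ = Nat.card f.range :=
          Nat.card_congr (QuotientAddGroup.quotientKerEquivRange f).toEquiv
      _ ∣ Nat.card (Mf (i + 1) ⧸ (Mf i).addSubgroupOf (Mf (i + 1))) :=
          AddSubgroup.card_addSubgroup_dvd_card _
  have hQ0 : Nat.card (Mf (0 + 1) ⧸ (Mf 0).addSubgroupOf (Mf (0 + 1))) = p := by
    have h0card : Nat.card (Mf 0) = 1 := by rw [h0]; exact AddSubgroup.card_bot
    have hc := hcard 0
    rw [h0card, mul_one] at hc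
    rw [← hc]
    exact h1
  have hQdvd : ∀ i,
      Nat.card (Mf (i + 1) ⧸ (Mf i).addSubgroupOf (Mf (i + 1))) ∣ p := by
    intro i
    induction i with
    | zero => rw [hQ0]
    | succ i ih => exact dvd_trans (hdvd i) ih
  have hQ : ∀ i < n, Nat.card (Mf (i + 1) ⧸ (Mf i).addSubgroupOf (Mf (i + 1))) = p := by
    intro i hi
    exact ((hp.eq_one_or_self_of_dvd _ (hQdvd i)).resolve_left (hQne1 i hi))
  refine ⟨hQ, ?_⟩
  rw [hM, Finset.prod_congr rfl (fun i hi => hQ i (Finset.mem_range.mp hi)),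
    Finset.prod_const, Finset.card_range]
end

section
/- Let p be a prime, ζ a primitive p-th root of unity, and n ≥ 0 an integer. Write n = a(p-1) + b with a ≥ 0 and 0 ≤ b ≤ p-2. Then the quotient ℤ_p[ζ]/(1-ζ)^n, viewed as an abelian group, is isomorphic to (ℤ/p^{a+1}ℤ)^b ⊕ (ℤ/p^aℤ)^{p-1-b}. -/
set_option synthInstance.maxHeartbeats 1000000
set_option maxHeartbeats 1000000

open Polynomial Algebra

section Irred
variable (p : ℕ) [hp : Fact p.Prime]

theorem cycloZp_comp_eisenstein :
    ((cyclotomic p ℤ_[p]).comp (X + 1)).IsEisensteinAt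
      (Ideal.span {(p : ℤ_[p])}) := by
  have hE := cyclotomic_comp_X_add_one_isEisensteinAt p
  have hmap : ((cyclotomic p ℤ).comp (X + 1)).map (Int.castRingHom ℤ_[p])
      = (cyclotomic p ℤ_[p]).comp (X + 1) := by
    rw [Polynomial.map_comp, map_cyclotomic]
    simp
  have hmonZ : ((cyclotomic p ℤ).comp (X + 1)).Monic :=
    (cyclotomic.monic p ℤ).comp_X_add_C 1
  have hmon : ((cyclotomic p ℤ_[p]).comp (X + 1)).Monic :=
    (cyclotomic.monic p ℤ_[p]).comp_X_add_C 1
  constructor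
  · rw [hmon.leadingCoeff, Ideal.mem_span_singleton]
    exact fun h => (PadicInt.prime_p (p := p)).not_isUnit (isUnit_of_dvd_one h)
  · intro i hi
    have hdeg : ((cyclotomic p ℤ_[p]).comp (X + 1)).natDegree
        = ((cyclotomic p ℤ).comp (X + 1)).natDegree := by
      rw [← hmap, hmonZ.natDegree_map]
    obtain ⟨c, hc⟩ := Ideal.mem_span_singleton.1 (hE.mem (hdeg ▸ hi))
    rw [← hmap, coeff_map, Ideal.mem_span_singleton]
    exact ⟨(c : ℤ_[p]), by exact_mod_cast congrArg (Int.castRingHom ℤ_[p]) hc⟩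
  · have h0 : ((cyclotomic p ℤ_[p]).comp (X + 1)).coeff 0 = (p : ℤ_[p]) := by
      rw [coeff_zero_eq_eval_zero, eval_comp]
      simp [eval_one_cyclotomic_prime]
    rw [h0, Ideal.span_singleton_pow, Ideal.mem_span_singleton]
    rintro ⟨c, hc⟩
    have hpne : (p : ℤ_[p]) ≠ 0 := (PadicInt.prime_p).ne_zero
    have h1 : (p:ℤ_[p]) * ((p:ℤ_[p]) * c) = (p:ℤ_[p]) * 1 := by
      rw [mul_one]
      exact (by ring : (p:ℤ_[p]) * ((p:ℤ_[p]) * c) = (p:ℤ_[p])^2 * c).trans hc.symm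
    exact (PadicInt.prime_p).not_isUnit
      (IsUnit.of_mul_eq_one _ (mul_left_cancel₀ hpne h1))

theorem cycloQp_irreducible : Irreducible (cyclotomic p ℚ_[p]) := by
  have h2 : Irreducible ((cyclotomic p ℤ_[p]).comp (X + 1)) := by
    refine (cycloZp_comp_eisenstein p).irreducible ?_ ?_ ?_
    · exact (Ideal.span_singleton_prime (PadicInt.prime_p).ne_zero).2 PadicInt.prime_p
    · exact ((cyclotomic.monic p ℤ_[p]).comp_X_add_C 1).isPrimitive
    · rw [natDegree_comp]
      have h4 : (X + 1 : ℤ_[p][X]).natDegree = 1 := by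
        simpa using natDegree_X_add_C (1:ℤ_[p])
      rw [h4, natDegree_cyclotomic, Nat.totient_prime hp.out, mul_one]
      have := hp.out.two_le; omega
  have h3 : (algEquivAevalXAddC (1:ℤ_[p])) (cyclotomic p ℤ_[p])
      = (cyclotomic p ℤ_[p]).comp (X + 1) := by
    simp [algEquivAevalXAddC, comp, aeval_def, eval₂_eq_eval_map]
  have h1 : Irreducible (cyclotomic p ℤ_[p]) :=
    (MulEquiv.irreducible_iff (algEquivAevalXAddC (1:ℤ_[p]))).mp (h3 ▸ h2)
  rw [← map_cyclotomic _ (algebraMap ℤ_[p] ℚ_[p])]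
  exact ((cyclotomic.monic p ℤ_[p]).irreducible_iff_irreducible_map_fraction_map).1 h1

end Irred

abbrev Rp (p : ℕ) [hp : Fact p.Prime] : Type _ := CyclotomicRing p ℤ_[p] ℚ_[p]
noncomputable abbrev Kp (p : ℕ) [hp : Fact p.Prime] : Type _ := CyclotomicField p ℚ_[p]

section
variable (p : ℕ) [hp : Fact p.Prime]



variable {ζ : Rp p} (hζ : IsPrimitiveRoot ζ p)

theorem hNeZero : NeZero ((p : ℕ) : ℤ_[p]) := ⟨by exact_mod_cast hp.out.ne_zero⟩

include hζ in
theorem int_zeta : IsIntegral ℤ_[p] ζ :=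
  ⟨X ^ p - 1, monic_X_pow_sub_C 1 hp.out.ne_zero, by simp [hζ.pow_eq_one]⟩

include hζ in
theorem int_pi : IsIntegral ℤ_[p] (1 - ζ) :=
  IsIntegral.sub isIntegral_one (int_zeta p hζ)

include hζ in
theorem adjoin_pi_top : adjoin ℤ_[p] ({1 - ζ} : Set (Rp p)) = ⊤ := by
  haveI := hNeZero p
  rw [_root_.eq_top_iff, ← IsCyclotomicExtension.adjoin_primitive_root_eq_top (n := p) hζ]
  refine adjoin_le ?_
  rw [Set.singleton_subset_iff, SetLike.mem_coe]
  have h1 : (1 - ζ) ∈ adjoin ℤ_[p] ({1 - ζ} : Set (Rp p)) :=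
    self_mem_adjoin_singleton ℤ_[p] (1 - ζ)
  have h2 : ζ = 1 - (1 - ζ) := by ring
  have h3 := Subalgebra.sub_mem (adjoin ℤ_[p] ({1 - ζ} : Set (Rp p)))
    (Subalgebra.one_mem _) h1
  rw [← h2] at h3
  exact h3

/-- power basis generated by 1 - ζ -/
noncomputable def pbPi : PowerBasis ℤ_[p] (Rp p) :=
  (Algebra.adjoin.powerBasis' (int_pi p hζ)).map <|
    (Subalgebra.equivOfEq _ _ (adjoin_pi_top p hζ)).trans Subalgebra.topEquiv

theorem pbPi_gen : (pbPi p hζ).gen = 1 - ζ := by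
  simp [pbPi, Algebra.adjoin.powerBasis'_gen]

include hζ in
theorem deg_zeta : (minpoly ℤ_[p] ζ).natDegree = p - 1 := by
  haveI := hNeZero p
  have hinj : Function.Injective (algebraMap (Rp p) (Kp p)) :=
    FaithfulSMul.algebraMap_injective _ _
  have hζK : IsPrimitiveRoot (algebraMap (Rp p) (Kp p) ζ) p := hζ.map_of_injective hinj
  have h1 : minpoly ℚ_[p] (algebraMap (Rp p) (Kp p) ζ) = (minpoly ℤ_[p] ζ).map (algebraMap ℤ_[p] ℚ_[p]) :=
    minpoly.isIntegrallyClosed_eq_field_fractions ℚ_[p] (Kp p) (int_zeta p hζ)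
  have h2 : cyclotomic p ℚ_[p] = minpoly ℚ_[p] (algebraMap (Rp p) (Kp p) ζ) := by
    haveI : NeZero ((p : ℕ) : ℚ_[p]) := ⟨by exact_mod_cast hp.out.ne_zero⟩
    exact hζK.minpoly_eq_cyclotomic_of_irreducible (cycloQp_irreducible p)
  have h3 := congrArg Polynomial.natDegree (h1.symm.trans h2.symm)
  rwa [(minpoly.monic (int_zeta p hζ)).natDegree_map, natDegree_cyclotomic,
    Nat.totient_prime hp.out] at h3

theorem pbPi_dim : (pbPi p hζ).dim = p - 1 := by
  -- via finrank and a zeta power basis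
  have hadjζ : adjoin ℤ_[p] ({ζ} : Set (Rp p)) = ⊤ := by
    haveI := hNeZero p
    exact IsCyclotomicExtension.adjoin_primitive_root_eq_top (n := p) hζ
  let pbζ : PowerBasis ℤ_[p] (Rp p) :=
    (Algebra.adjoin.powerBasis' (int_zeta p hζ)).map <|
      (Subalgebra.equivOfEq _ _ hadjζ).trans Subalgebra.topEquiv
  have h1 : pbζ.dim = p - 1 := by
    simpa [pbζ, Algebra.adjoin.powerBasis'_dim] using deg_zeta p hζ
  have := pbζ.finrank
  have h2 := (pbPi p hζ).finrank
  omega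

/-- The basis 1, π, ..., π^(p-2) of R with π = 1 - ζ. -/
noncomputable def piBasis : Module.Basis (Fin (p - 1)) ℤ_[p] (Rp p) :=
  (pbPi p hζ).basis.reindex (finCongr (pbPi_dim p hζ))

theorem piBasis_apply (j : Fin (p - 1)) : piBasis p hζ j = (1 - ζ) ^ (j : ℕ) := by
  simp [piBasis, Module.Basis.reindex_apply, PowerBasis.coe_basis, pbPi_gen]

include hζ in
theorem assoc_p : Associated ((p : ℕ) : Rp p) ((1 - ζ) ^ (p - 1)) := by
  haveI : NeZero p := ⟨hp.out.ne_zero⟩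
  haveI : CharZero (Rp p) :=
    charZero_of_injective_algebraMap
      (FaithfulSMul.algebraMap_injective ℤ_[p] (Rp p))
  have hprod : cyclotomic p (Rp p) = ∏ μ ∈ primitiveRoots p (Rp p), (X - C μ) :=
    cyclotomic_eq_prod_X_sub_primitiveRoots hζ
  have h1 : ((p : ℕ) : Rp p) = ∏ μ ∈ primitiveRoots p (Rp p), (1 - μ) := by
    have := eval_one_cyclotomic_prime (R := Rp p) (p := p)
    rw [hprod] at this
    simpa [eval_prod] using this.symm
  have h2 : Associated (∏ μ ∈ primitiveRoots p (Rp p), (1 - μ))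
      (∏ _μ ∈ primitiveRoots p (Rp p), (1 - ζ)) := by
    refine Associated.prod _ _ _ fun μ hμ => ?_
    have hμ' : IsPrimitiveRoot μ p := (mem_primitiveRoots hp.out.pos).1 hμ
    obtain ⟨i, _, rfl⟩ := hζ.eq_pow_of_pow_eq_one hμ'.pow_eq_one
    obtain ⟨j, _, hj⟩ := hμ'.eq_pow_of_pow_eq_one hζ.pow_eq_one
    refine associated_of_dvd_dvd ?_ ?_
    · nth_rewrite 2 [← hj]
      exact one_sub_dvd_one_sub_pow (ζ ^ i) j
    · exact one_sub_dvd_one_sub_pow ζ i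
  have h3 : (∏ _μ ∈ primitiveRoots p (Rp p), (1 - ζ)) = (1 - ζ) ^ (p - 1) := by
    rw [Finset.prod_const, hζ.card_primitiveRoots, Nat.totient_prime hp.out]
  rw [← h3]
  exact h1 ▸ h2


end


/-- congr for ZMod -/
def zmodAddCongr {m n : ℕ} (h : m = n) : ZMod m ≃+ ZMod n := by subst h; exact AddEquiv.refl _

/-- quotient of ℤ_p by p^k as ZMod -/
noncomputable def padicQuot (p : ℕ) [Fact p.Prime] (k : ℕ) :
    (ℤ_[p] ⧸ (Ideal.span {(p : ℤ_[p]) ^ k} : Ideal ℤ_[p])) ≃+ ZMod (p ^ k) := by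
  have hsurj : Function.Surjective (PadicInt.toZModPow (p := p) k) := by
    intro x
    haveI : NeZero (p ^ k) := ⟨pow_ne_zero _ (Fact.out (p := p.Prime)).ne_zero⟩
    exact ⟨(x.val : ℤ_[p]), by rw [map_natCast]; exact ZMod.natCast_rightInverse x⟩
  exact ((Ideal.quotEquivOfEq (PadicInt.ker_toZModPow k).symm).trans
    (RingHom.quotientKerEquivOfSurjective hsurj)).toAddEquiv

/-- pi over a sum type as AddEquiv -/
def piSumAddEquiv {α β : Type*} (f : α ⊕ β → Type*) [∀ i, AddZeroClass (f i)] :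
    (∀ i, f i) ≃+ (∀ a, f (.inl a)) × (∀ b, f (.inr b)) where
  toFun g := (fun a => g (.inl a), fun b => g (.inr b))
  invFun g i := Sum.rec g.1 g.2 i
  left_inv g := by funext i; cases i <;> rfl
  right_inv g := rfl
  map_add' g h := rfl

/-- Structure of `ℤ_p[ζ]/(1-ζ)^n` as an abelian group: writing `n = a(p-1) + b` with
`0 ≤ b ≤ p-2`, it is isomorphic to `(ℤ/p^{a+1})^b ⊕ (ℤ/p^a)^{p-1-b}`. Here `ℤ_p[ζ]`
is realized as the cyclotomic ring `CyclotomicRing p ℤ_p ℚ_p` and `ζ` is a primitive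
`p`-th root of unity in it. -/
theorem stmt5 (p : ℕ) [hp : Fact p.Prime] (n a b : ℕ)
    (hnab : n = a * (p - 1) + b) (hb : b ≤ p - 2)
    (ζ : CyclotomicRing p ℤ_[p] ℚ_[p]) (hζ : IsPrimitiveRoot ζ p) :
    Nonempty
      ((CyclotomicRing p ℤ_[p] ℚ_[p] ⧸
          Ideal.span {(1 - ζ) ^ n}) ≃+
        ((Fin b → ZMod (p ^ (a + 1))) × (Fin (p - 1 - b) → ZMod (p ^ a)))) := by
  have hp2 : 2 ≤ p := hp.out.two_le
  set π : Rp p := 1 - ζ with hπ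
  set B : Module.Basis (Fin (p - 1)) ℤ_[p] (Rp p) := piBasis p hζ with hBdef
  have hB : ∀ j : Fin (p - 1), B j = π ^ (j : ℕ) := piBasis_apply p hζ
  obtain ⟨u, hu⟩ := assoc_p p hζ
  rw [← hπ] at hu
  -- exponents
  set e : Fin (p - 1) → ℕ := fun j => if (j : ℕ) < b then a + 1 else a with he
  have he_le : ∀ j, e j ≤ a + 1 := by intro j; simp only [he]; split <;> omega
  set I : Ideal (Rp p) := Ideal.span {π ^ n} with hI
  set g : Fin (p - 1) → Rp p := fun j => ((p : ℤ_[p]) ^ (e j)) • B j with hg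
  set S : Submodule ℤ_[p] (Rp p) := Submodule.span ℤ_[p] (Set.range g) with hS
  -- scalar action
  have hsmul : ∀ (k : ℕ) (y : Rp p), ((p : ℤ_[p]) ^ k) • y = ((p : ℕ) : Rp p) ^ k * y := by
    intro k y
    rw [Algebra.smul_def, map_pow, map_natCast]
  -- membership criterion
  have hSD : ∀ x ∈ S, ∀ j, (p : ℤ_[p]) ^ (e j) ∣ B.repr x j := by
    intro x hx
    have hgen : ∀ y ∈ Set.range g, ∀ i, (p : ℤ_[p]) ^ (e i) ∣ B.repr y i := by
      rintro _ ⟨j, rfl⟩ i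
      show (p : ℤ_[p]) ^ (e i) ∣ B.repr ((p : ℤ_[p]) ^ (e j) • B j) i
      rw [map_smul, B.repr_self, Finsupp.smul_apply, smul_eq_mul]
      rcases eq_or_ne i j with rfl | hij
      · simp
      · rw [Finsupp.single_apply, if_neg (fun h => hij h.symm)]
        simp
    let D : Submodule ℤ_[p] (Rp p) :=
      { carrier := {x | ∀ j, (p : ℤ_[p]) ^ (e j) ∣ B.repr x j}
        add_mem' := fun hx hy j => by
          rw [map_add, Finsupp.add_apply]; exact dvd_add (hx j) (hy j)
        zero_mem' := fun j => by simp
        smul_mem' := fun c x hx j => by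
          rw [map_smul, Finsupp.smul_apply, smul_eq_mul]; exact (hx j).mul_left c }
    have hsub : Set.range g ⊆ ↑D := fun y hy => hgen y hy
    have hxD : x ∈ D := Submodule.span_le.2 hsub hx
    exact hxD
  have hmemS : ∀ x : Rp p, (∀ j, (p : ℤ_[p]) ^ (e j) ∣ B.repr x j) → x ∈ S := by
    intro x hx
    choose d hd using hx
    have hxe : x = ∑ j, d j • g j := by
      conv_lhs => rw [← B.sum_repr x]
      refine Finset.sum_congr rfl fun j _ => ?_
      rw [hd j, hg]
      simp only [smul_smul]
      rw [mul_comm]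
    rw [hxe]
    exact Submodule.sum_mem _ fun j _ =>
      Submodule.smul_mem _ _ (Submodule.subset_span ⟨j, rfl⟩)
  -- S ⊆ I
  have hgI : ∀ j, g j ∈ I := by
    intro j
    have hle : n ≤ (p - 1) * e j + (j : ℕ) := by
      rcases lt_or_ge (j : ℕ) b with hjb | hjb
      · have hej : e j = a + 1 := if_pos hjb
        rw [hej, hnab]
        have : (p - 1) * (a + 1) + (j : ℕ) = a * (p - 1) + ((p - 1) + (j : ℕ)) := by ring
        rw [this]
        exact Nat.add_le_add_left (by omega) _
      · have hej : e j = a := if_neg (by omega)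
        rw [hej, hnab, mul_comm]
        exact Nat.add_le_add_left (by omega) _
    rw [hI, Ideal.mem_span_singleton]
    have hp_eq : ((p : ℕ) : Rp p) = π ^ (p - 1) * ↑u⁻¹ := by
      rw [← hu]
      simp [mul_assoc]
    have : g j = π ^ ((p - 1) * e j + (j : ℕ)) * (↑u⁻¹ : Rp p) ^ (e j) := by
      rw [hg]
      simp only []
      rw [hsmul, hB, hp_eq, mul_pow, ← pow_mul, pow_add]
      ring
    rw [this]
    exact dvd_mul_of_dvd_left (pow_dvd_pow π hle) _
  -- I ⊆ S
  have claim0 : ∀ y : Rp p, ((p : ℕ) : Rp p) ^ (a + 1) * y ∈ S := by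
    intro y
    refine hmemS _ fun j => ?_
    rw [← hsmul, map_smul, Finsupp.smul_apply, smul_eq_mul]
    exact (pow_dvd_pow _ (he_le j)).mul_right _
  have claim1 : ∀ s ∈ S, π * s ∈ S := by
    intro s hs
    refine Submodule.span_induction ?_ ?_ ?_ ?_ hs
    · rintro _ ⟨j, rfl⟩
      have hjlt : (j : ℕ) + 1 ≤ p - 1 := j.isLt
      rcases lt_or_eq_of_le hjlt with hlt | heq
      · set j' : Fin (p - 1) := ⟨(j : ℕ) + 1, hlt⟩ with hj'
        have hee : e j' ≤ e j := by
          simp only [he, hj']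
          split <;> split <;> omega
        have : π * g j = ((p : ℤ_[p]) ^ (e j - e j')) • g j' := by
          rw [hg]
          simp only [smul_smul]
          rw [mul_smul_comm, hB, hB, ← pow_succ']
          rw [← pow_add, Nat.sub_add_cancel hee]
        rw [this]
        exact Submodule.smul_mem _ _ (Submodule.subset_span ⟨j', rfl⟩)
      · -- j = p - 2, π * g j = p^(e j + 1) * u
        have hjb : ¬ ((j : ℕ) < b) := by omega
        have hej : e j = a := if_neg hjb
        have : π * g j = ((p : ℕ) : Rp p) ^ (a + 1) * ↑u := by
          rw [hg]
          simp only []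
          rw [mul_smul_comm, hB, ← pow_succ', heq, hsmul, hej, ← hu]
          ring
        rw [this]
        exact claim0 _
    · simp
    · intro x y _ _ hx hy
      rw [mul_add]
      exact Submodule.add_mem _ hx hy
    · intro c x _ hx
      rw [mul_smul_comm]
      exact Submodule.smul_mem _ _ hx
  have claim2 : ∀ r : Rp p, ∀ s ∈ S, r * s ∈ S := by
    intro r
    have hr : r ∈ adjoin ℤ_[p] ({π} : Set (Rp p)) := by
      rw [adjoin_pi_top p hζ]; trivial
    refine adjoin_induction ?_ ?_ ?_ ?_ hr
    · rintro x rfl s hs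
      exact claim1 s hs
    · intro c s hs
      rw [← Algebra.smul_def]
      exact Submodule.smul_mem _ _ hs
    · intro x y _ _ hx hy s hs
      rw [add_mul]
      exact Submodule.add_mem _ (hx s hs) (hy s hs)
    · intro x y _ _ hx hy s hs
      rw [mul_assoc]
      exact hx _ (hy s hs)
  have hπnS : π ^ n ∈ S := by
    have hblt : b < p - 1 := by omega
    set jb : Fin (p - 1) := ⟨b, hblt⟩ with hjb
    have hejb : e jb = a := if_neg (by simp [hjb])
    have : π ^ n = (↑u : Rp p) ^ a * g jb := by
      rw [hg]
      simp only []
      rw [hsmul, hB, hejb]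
      have hbc : ((jb : Fin (p - 1)) : ℕ) = b := rfl
      rw [hbc, hnab, pow_add, mul_comm a (p - 1), pow_mul, ← hu, mul_pow]
      ring
    rw [this]
    exact claim2 _ _ (Submodule.subset_span ⟨jb, rfl⟩)
  have hIS : I.restrictScalars ℤ_[p] = S := by
    refine le_antisymm ?_ (Submodule.span_le.2 (by rintro _ ⟨j, rfl⟩; exact hgI j))
    intro x hx
    obtain ⟨r, hr⟩ := Ideal.mem_span_singleton.1 (by exact hx)
    rw [hr, mul_comm]
    exact claim2 r _ hπnS
  -- assemble
  set P : Fin (p - 1) → Ideal ℤ_[p] := fun j => Ideal.span {(p : ℤ_[p]) ^ (e j)} with hP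
  set φ : Rp p ≃ₗ[ℤ_[p]] (Fin (p - 1) → ℤ_[p]) := B.equivFun with hφ
  have hmap : (I.restrictScalars ℤ_[p]).map (φ : Rp p →ₗ[ℤ_[p]] _) =
      Submodule.pi Set.univ P := by
    ext y
    rw [Submodule.mem_map]
    constructor
    · rintro ⟨x, hx, rfl⟩
      rw [hIS] at hx
      rw [Submodule.mem_pi]
      intro j _
      simp only [hP]
      rw [Ideal.mem_span_singleton]
      have := hSD x hx j
      rwa [hφ, LinearEquiv.coe_coe, Module.Basis.equivFun_apply]
    · intro hy
      refine ⟨φ.symm y, ?_, φ.apply_symm_apply y⟩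
      rw [hIS]
      refine hmemS _ fun j => ?_
      have h1 : B.repr (φ.symm y) j = y j := by
        have := φ.apply_symm_apply y
        rw [hφ] at this ⊢
        rw [← Module.Basis.equivFun_apply, this]
      rw [h1, ← Ideal.mem_span_singleton]
      have := Submodule.mem_pi.1 hy j (Set.mem_univ j)
      simpa only [hP] using this
  have E0 := (Submodule.Quotient.restrictScalarsEquiv ℤ_[p] I).symm.toAddEquiv
  have E2 := (Submodule.Quotient.equiv (I.restrictScalars ℤ_[p])
      (Submodule.pi Set.univ P) φ hmap).toAddEquiv
  have E3 := (Submodule.quotientPi P).toAddEquiv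
  have E4 := AddEquiv.piCongrRight fun j => padicQuot p (e j)
  -- splitting
  have h1 : p - 1 = b + (p - 1 - b) := by omega
  set finC : Fin b ⊕ Fin (p - 1 - b) ≃ Fin (p - 1) :=
    finSumFinEquiv.trans (finCongr h1.symm) with hfinC
  have E5 := (RingEquiv.piCongrLeft' (fun j => ZMod (p ^ (e j))) finC.symm).toAddEquiv
  have E6 := piSumAddEquiv (fun s => ZMod (p ^ (e (finC s))))
  have hcl : ∀ i : Fin b, e (finC (Sum.inl i)) = a + 1 := by
    intro i
    have hco : ((finC (Sum.inl i)) : ℕ) = (i : ℕ) := by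
      simp [hfinC]
    simp only [he, hco]
    exact if_pos i.isLt
  have hcr : ∀ i : Fin (p - 1 - b), e (finC (Sum.inr i)) = a := by
    intro i
    have hco : ((finC (Sum.inr i)) : ℕ) = b + (i : ℕ) := by
      simp [hfinC]
    simp only [he, hco]
    exact if_neg (by omega)
  have E7 := AddEquiv.prodCongr
    (AddEquiv.piCongrRight fun i : Fin b =>
      zmodAddCongr (congrArg (p ^ ·) (hcl i)))
    (AddEquiv.piCongrRight fun i : Fin (p - 1 - b) =>
      zmodAddCongr (congrArg (p ^ ·) (hcr i)))
  exact ⟨E0.trans <| E2.trans <| E3.trans <| E4.trans <| E5.trans <| E6.trans E7⟩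
end

section
/- Let p be a prime and G = ⟨σ⟩ cyclic of order p. In the group ring ℤ[G], the norm element ν = 1 + σ + ⋯ + σ^{p-1} satisfies ν = (1-σ)^{p-1} - p·A(σ) for some A(σ) ∈ ℤ[G] with A(σ) ≡ -1 modulo the augmentation ideal (1-σ); in particular A(σ) is invertible in ℤ_p[G]. -/
/-- The canonical coefficient-extension ring homomorphism `ℤ[G] → ℤ_p[G]`
for `G = ℤ/pℤ` (written multiplicatively). -/
noncomputable def intToPadicGroupRing (p : ℕ) [Fact p.Prime] :
    MonoidAlgebra ℤ (Multiplicative (ZMod p)) →+*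
      MonoidAlgebra ℤ_[p] (Multiplicative (ZMod p)) :=
  MonoidAlgebra.liftNCRingHom
    (MonoidAlgebra.singleOneRingHom.comp (Int.castRingHom ℤ_[p]))
    (MonoidAlgebra.of ℤ_[p] (Multiplicative (ZMod p)))
    (fun _ _ => Commute.all _ _)

namespace Stmt7Aux

open MonoidAlgebra Finset

variable (p : ℕ) [hp : Fact p.Prime]

lemma aux_choose : ∀ k, k < p → (((p-1).choose k : ℕ) : ZMod p) = (-1)^k := by
  intro k
  induction k with
  | zero => simp
  | succ n ih =>
    intro hlt
    have hn := ih (Nat.lt_of_succ_lt hlt)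
    have hpk : ((p.choose (n+1) : ℕ) : ZMod p) = 0 := by
      rw [ZMod.natCast_eq_zero_iff]
      exact Nat.Prime.dvd_choose_self hp.out (Nat.succ_ne_zero n) hlt
    have hps : p - 1 + 1 = p := Nat.succ_pred_eq_of_pos hp.out.pos
    have hch : p.choose (n+1) = (p-1).choose n + (p-1).choose (n+1) := by
      conv_lhs => rw [← hps]
      exact Nat.choose_succ_succ _ _
    rw [hch] at hpk
    push_cast at hpk hn ⊢
    rw [hn] at hpk
    linear_combination hpk

lemma neg_one_pow_pred : ((-1 : ZMod p))^(p-1) = 1 := by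
  rcases hp.out.eq_two_or_odd' with h2 | hodd
  · subst h2
    have h : (-1 : ZMod 2) = 1 := rfl
    rw [h, one_pow]
  · exact (Nat.Odd.sub_odd hodd odd_one).neg_one_pow

/-- `σ` as an element of `ℤ[G]`. -/
noncomputable def sig : MonoidAlgebra ℤ (Multiplicative (ZMod p)) :=
  MonoidAlgebra.of ℤ (Multiplicative (ZMod p)) (Multiplicative.ofAdd 1)

lemma sig_pow (k : ℕ) : sig p ^ k
    = MonoidAlgebra.of ℤ (Multiplicative (ZMod p)) (Multiplicative.ofAdd (k : ZMod p)) := by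
  rw [sig, ← map_pow, ← ofAdd_nsmul]
  norm_num

lemma sum_of_eq : (∑ g : Multiplicative (ZMod p), MonoidAlgebra.of ℤ (Multiplicative (ZMod p)) g)
    = ∑ k ∈ Finset.range p, sig p ^ k := by
  haveI : NeZero p := ⟨hp.out.ne_zero⟩
  simp only [sig_pow]
  rw [Finset.sum_nbij' (i := fun (g : Multiplicative (ZMod p)) => (Multiplicative.toAdd g).val)
      (j := fun k => (Multiplicative.ofAdd ((k : ZMod p))))]
  · intro a _; exact Finset.mem_range.mpr (ZMod.val_lt _)
  · intro a _; exact Finset.mem_univ _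
  · intro a _
    simp [ZMod.natCast_rightInverse _]
  · intro k hk
    simp [ZMod.val_cast_of_lt (Finset.mem_range.mp hk)]
  · intro a _
    simp [ZMod.natCast_rightInverse _]

lemma aux_dvd : ((p : MonoidAlgebra ℤ (Multiplicative (ZMod p)))) ∣
    ((1 - sig p) ^ (p - 1) - ∑ g : Multiplicative (ZMod p),
      MonoidAlgebra.of ℤ (Multiplicative (ZMod p)) g) := by
  have hps : p - 1 + 1 = p := Nat.succ_pred_eq_of_pos hp.out.pos
  rw [sum_of_eq, sub_pow, hps, ← Finset.sum_range_reflect (fun k => sig p ^ k) p,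
    ← Finset.sum_sub_distrib]
  apply Finset.dvd_sum
  intro m hm
  have hmp : m < p := Finset.mem_range.mp hm
  obtain ⟨d, hd⟩ : (p:ℤ) ∣ ((-1)^(m+(p-1)) * ((p-1).choose m : ℤ) - 1) := by
    rw [← ZMod.intCast_zmod_eq_zero_iff_dvd]
    push_cast
    rw [aux_choose p m hmp, ← pow_add]
    have : m + (p - 1) + m = 2*m + (p-1) := by omega
    rw [this, pow_add, pow_mul]
    simp [neg_one_pow_pred p]
  refine ⟨(d : MonoidAlgebra ℤ (Multiplicative (ZMod p))) * sig p ^ (p - 1 - m), ?_⟩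
  have hcast := congrArg (fun z : ℤ => (z : MonoidAlgebra ℤ (Multiplicative (ZMod p)))) hd
  push_cast at hcast
  linear_combination sig p ^ (p - 1 - m) * hcast

lemma gen_mem (g : Multiplicative (ZMod p)) :
    MonoidAlgebra.of ℤ (Multiplicative (ZMod p)) g - 1 ∈ Ideal.span {1 - sig p} := by
  haveI : NeZero p := ⟨hp.out.ne_zero⟩
  have hofg : MonoidAlgebra.of ℤ (Multiplicative (ZMod p)) g
      = sig p ^ (Multiplicative.toAdd g).val := by
    rw [sig_pow]
    congr 1
    simp [ZMod.natCast_rightInverse _]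
  rw [Ideal.mem_span_singleton, hofg]
  refine ⟨-(∑ i ∈ Finset.range (Multiplicative.toAdd g).val, sig p ^ i), ?_⟩
  have := geom_sum_mul (sig p) (Multiplicative.toAdd g).val
  linear_combination -this

/-- The augmentation map. -/
noncomputable def eps : MonoidAlgebra ℤ (Multiplicative (ZMod p)) →ₐ[ℤ] ℤ :=
  MonoidAlgebra.lift ℤ ℤ (Multiplicative (ZMod p)) 1

lemma eps_of (g : Multiplicative (ZMod p)) :
    eps p (MonoidAlgebra.of ℤ (Multiplicative (ZMod p)) g) = 1 := by
  rw [eps, MonoidAlgebra.lift_of]; rfl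

lemma ker_sub_mem (z : MonoidAlgebra ℤ (Multiplicative (ZMod p))) :
    z - (eps p z) • (1 : MonoidAlgebra ℤ (Multiplicative (ZMod p)))
      ∈ Ideal.span {1 - sig p} := by
  induction z using MonoidAlgebra.induction_on with
  | of g =>
    have : eps p (MonoidAlgebra.of ℤ (Multiplicative (ZMod p)) g) = 1 := eps_of p g
    rw [this, one_smul]
    exact gen_mem p g
  | add f g hf hg =>
    have h := Ideal.add_mem _ hf hg
    have hh : (f - eps p f • (1 : MonoidAlgebra ℤ (Multiplicative (ZMod p))))
        + (g - eps p g • (1 : MonoidAlgebra ℤ (Multiplicative (ZMod p))))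
        = (f + g) - eps p (f + g) • (1 : MonoidAlgebra ℤ (Multiplicative (ZMod p))) := by
      rw [map_add]
      module
    rwa [hh] at h
  | smul r f hf =>
    have hεs : eps p (r • f) = r * eps p f := by
      rw [map_zsmul, smul_eq_mul]
    rw [hεs, ← smul_eq_mul, smul_assoc, ← smul_sub, zsmul_eq_mul]
    exact Ideal.mul_mem_left _ _ hf

end Stmt7Aux

/-- In `ℤ[G]`, `G = ⟨σ⟩` cyclic of order `p`, the norm element
`ν = 1 + σ + ⋯ + σ^{p-1}` satisfies `ν = (1-σ)^{p-1} - p·A(σ)` with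
`A(σ) ≡ -1 (mod (1-σ))`; in particular `A(σ)` is invertible in `ℤ_p[G]`. -/
theorem stmt7 (p : ℕ) [hp : Fact p.Prime] :
    ∃ A : MonoidAlgebra ℤ (Multiplicative (ZMod p)),
      (∑ g : Multiplicative (ZMod p), MonoidAlgebra.of ℤ (Multiplicative (ZMod p)) g) =
        (1 - MonoidAlgebra.of ℤ (Multiplicative (ZMod p)) (Multiplicative.ofAdd 1)) ^ (p - 1)
          - (p : MonoidAlgebra ℤ (Multiplicative (ZMod p))) * A ∧
      A + 1 ∈ Ideal.span
        {1 - MonoidAlgebra.of ℤ (Multiplicative (ZMod p)) (Multiplicative.ofAdd 1)} ∧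
      IsUnit (intToPadicGroupRing p A) := by
  classical
  obtain ⟨A, hA⟩ := Stmt7Aux.aux_dvd p
  have hmain : (∑ g : Multiplicative (ZMod p), MonoidAlgebra.of ℤ (Multiplicative (ZMod p)) g) =
      (1 - MonoidAlgebra.of ℤ (Multiplicative (ZMod p)) (Multiplicative.ofAdd 1)) ^ (p - 1)
        - (p : MonoidAlgebra ℤ (Multiplicative (ZMod p))) * A := by
    rw [show MonoidAlgebra.of ℤ (Multiplicative (ZMod p)) (Multiplicative.ofAdd 1)
      = Stmt7Aux.sig p from rfl]
    linear_combination -hA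
  -- the augmentation of A is -1
  have hp1 : p - 1 ≠ 0 := by have := hp.out.two_le; omega
  have hεν : Stmt7Aux.eps p (∑ g : Multiplicative (ZMod p),
      MonoidAlgebra.of ℤ (Multiplicative (ZMod p)) g) = p := by
    rw [map_sum]
    simp only [Stmt7Aux.eps_of]
    simp [Finset.card_univ, ZMod.card]
  have hεA : Stmt7Aux.eps p A = -1 := by
    have h := congrArg (Stmt7Aux.eps p) hmain
    rw [hεν, map_sub, map_pow, map_sub, map_one, Stmt7Aux.eps_of, sub_self,
      zero_pow hp1, map_mul, map_natCast] at h
    have hppos : (0:ℤ) < p := by exact_mod_cast hp.out.pos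
    nlinarith [h]
  have hmem : A + 1 ∈ Ideal.span
      {1 - MonoidAlgebra.of ℤ (Multiplicative (ZMod p)) (Multiplicative.ofAdd 1)} := by
    have h := Stmt7Aux.ker_sub_mem p A
    rw [hεA] at h
    rw [show MonoidAlgebra.of ℤ (Multiplicative (ZMod p)) (Multiplicative.ofAdd 1)
      = Stmt7Aux.sig p from rfl]
    simpa using h
  refine ⟨A, hmain, hmem, ?_⟩
  -- invertibility in ℤ_p[G]
  have hφof : ∀ g : Multiplicative (ZMod p), intToPadicGroupRing p
      (MonoidAlgebra.of ℤ (Multiplicative (ZMod p)) g)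
      = MonoidAlgebra.of ℤ_[p] (Multiplicative (ZMod p)) g := by
    intro g
    simp [intToPadicGroupRing, MonoidAlgebra.liftNCRingHom, MonoidAlgebra.of_apply,
      MonoidAlgebra.liftNC_single, MonoidAlgebra.singleOneRingHom]
  set S := MonoidAlgebra ℤ_[p] (Multiplicative (ZMod p)) with hSdef
  set τ : S := MonoidAlgebra.of ℤ_[p] (Multiplicative (ZMod p)) (Multiplicative.ofAdd 1)
    with hτdef
  by_contra hu
  obtain ⟨m, hm, hum⟩ := exists_max_ideal_of_mem_nonunits hu
  haveI := hm
  haveI : Module.Finite ℤ_[p] S :=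
    Module.Finite.equiv ((Finsupp.linearEquivFunOnFinite ℤ_[p] ℤ_[p] (Multiplicative (ZMod p))).symm.trans
      (MonoidAlgebra.coeffLinearEquiv ℤ_[p]).symm)
  haveI : Algebra.IsIntegral ℤ_[p] S := Algebra.IsIntegral.of_finite ℤ_[p] S
  have hcomax : (m.comap (algebraMap ℤ_[p] S)).IsMaximal :=
    Ideal.isMaximal_comap_of_isIntegral_of_isMaximal m
  have hpm : ((p : ℕ) : S) ∈ m := by
    have h1 : m.comap (algebraMap ℤ_[p] S) = IsLocalRing.maximalIdeal ℤ_[p] :=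
      IsLocalRing.eq_maximalIdeal hcomax
    have h2 : ((p : ℕ) : ℤ_[p]) ∈ m.comap (algebraMap ℤ_[p] S) := by
      rw [h1, PadicInt.maximalIdeal_eq_span_p]
      exact Ideal.subset_span rfl
    simpa using h2
  haveI : m.IsPrime := hm.isPrime
  haveI : Nontrivial (S ⧸ m) := Ideal.Quotient.nontrivial_iff.mpr hm.ne_top
  have hπp : ((p : ℕ) : S ⧸ m) = 0 := by
    have h := Ideal.Quotient.eq_zero_iff_mem.mpr hpm
    rwa [map_natCast] at h
  haveI : CharP (S ⧸ m) p := (CharP.charP_iff_prime_eq_zero hp.out).mpr hπp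
  have hτp : τ ^ p = 1 := by
    rw [hτdef, ← map_pow, ← ofAdd_nsmul]
    have h1 : p • (1 : ZMod p) = 0 := by
      simp [nsmul_eq_mul, ZMod.natCast_self]
    rw [h1, ofAdd_zero, map_one]
  have ht : (1 - Ideal.Quotient.mk m τ) ^ p = 0 := by
    rw [sub_pow_char, one_pow, ← map_pow, hτp, map_one, sub_self]
  have ht1 : Ideal.Quotient.mk m τ = 1 := by
    have h := pow_eq_zero_iff hp.out.ne_zero |>.mp ht
    linear_combination -h
  have hdvd : (1 - τ) ∣ (intToPadicGroupRing p A + 1) := by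
    have h1 : (1 - MonoidAlgebra.of ℤ (Multiplicative (ZMod p)) (Multiplicative.ofAdd 1))
        ∣ (A + 1) := Ideal.mem_span_singleton.mp hmem
    have h2 := map_dvd (intToPadicGroupRing p) h1
    have h3 : intToPadicGroupRing p
        (1 - MonoidAlgebra.of ℤ (Multiplicative (ZMod p)) (Multiplicative.ofAdd 1))
        = 1 - τ := by
      rw [map_sub, hφof, map_one]
    have h4 : intToPadicGroupRing p (A + 1) = intToPadicGroupRing p A + 1 := by
      rw [map_add, map_one]
    rwa [h3, h4] at h2
  obtain ⟨c, hc⟩ := hdvd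
  have hz : Ideal.Quotient.mk m (intToPadicGroupRing p A + 1) = 0 := by
    rw [hc, map_mul, map_sub, map_one, ht1, sub_self, zero_mul]
  have h0 : Ideal.Quotient.mk m (intToPadicGroupRing p A) = 0 :=
    Ideal.Quotient.eq_zero_iff_mem.mpr hum
  rw [map_add, h0, map_one, zero_add] at hz
  exact one_ne_zero hz
end

section
/- Let p be a prime, G = ⟨σ⟩ cyclic of order p, and M a finite ℤ_p[G]-module annihilated by the norm ν = 1+σ+⋯+σ^{p-1}. For k ≥ 0 let M^{(k)} = {h ∈ M : h^{p^k} = 1} and let M_i = {h ∈ M : h^{(1-σ)^i} = 1}. Then M^{(k)} = M_{k(p-1)} for all k ≥ 0. -/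
/-- Geometric-type expansion: `∑_{i<n} (1-t)^i = ∑_{j<n} C(n,j+1) • (-t)^j`. -/
lemma geom_expand {R : Type*} [Ring R] (t : R) :
    ∀ n : ℕ, ∑ i ∈ Finset.range n, (1 - t) ^ i
      = ∑ j ∈ Finset.range n, n.choose (j + 1) • (-t) ^ j := by
  intro n
  induction n with
  | zero => simp
  | succ n ih =>
    have hbin : (1 - t) ^ n = ∑ j ∈ Finset.range (n + 1), n.choose j • (-t) ^ j := by
      have h1 : (1 : R) - t = -t + 1 := by rw [sub_eq_add_neg, add_comm]
      rw [h1, (Commute.one_right (-t)).add_pow n]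
      refine Finset.sum_congr rfl fun j hj => ?_
      rw [one_pow, mul_one, nsmul_eq_mul, Nat.cast_comm]
    have hsplit : ∑ j ∈ Finset.range (n + 1), (n + 1).choose (j + 1) • (-t) ^ j
        = ∑ j ∈ Finset.range (n + 1), (n.choose j • (-t) ^ j + n.choose (j + 1) • (-t) ^ j) := by
      refine Finset.sum_congr rfl fun j _ => ?_
      rw [Nat.choose_succ_succ', add_smul]
    rw [Finset.sum_range_succ, ih, hsplit, Finset.sum_add_distrib, ← hbin,
      Finset.sum_range_succ (fun j => n.choose (j + 1) • (-t) ^ j), Nat.choose_succ_self,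
      zero_smul, add_zero, add_comm]

/-- For a finite `ℤ_p[G]`-module `M` (`G = ⟨σ⟩` of order `p`) annihilated by the norm
`ν = 1 + σ + ⋯ + σ^{p-1}`, the `p^k`-torsion subgroup `M^{(k)}` coincides with the
filtration step `M_{k(p-1)} = ker((1-σ)^{k(p-1)})`. -/
theorem stmt8 {M : Type*} [AddCommGroup M] [Finite M] (p : ℕ) (hp : p.Prime)
    (σ : AddAut M) (hσ : p • σ = 0)
    (hpgrp : ∀ x : M, ∃ j : ℕ, p ^ j • x = 0)
    (hν : ∀ x : M, ∑ i ∈ Finset.range p, (i • σ) x = 0) :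
    ∀ (k : ℕ) (x : M), p ^ k • x = 0 ↔ ((oneSubSigma σ) ^ (k * (p - 1))) x = 0 := by
  classical
  set t : AddMonoid.End M := oneSubSigma σ with ht
  set s : AddMonoid.End M := AddEquiv.toAddMonoidHom σ with hs
  have hts : t = 1 - s := rfl
  have hst : s = 1 - t := by rw [hts, sub_sub_cancel]
  -- powers of s agree with powers of σ
  have hpow : ∀ (i : ℕ) (y : M), (s ^ i) y = (i • σ) y := by
    intro i
    induction i with
    | zero => intro y; rfl
    | succ i ihh =>
      intro y
      rw [pow_succ, succ_nsmul]
      exact ihh (σ y)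
  -- the norm is zero as an endomorphism
  have hν0 : ∑ i ∈ Finset.range p, s ^ i = 0 := by
    refine AddMonoid.End.ext M fun y => ?_
    rw [show (∑ i ∈ Finset.range p, s ^ i) y = ∑ i ∈ Finset.range p, (s ^ i) y from
      AddMonoidHom.finset_sum_apply _ _ _]
    simpa [hpow] using hν y
  -- key identity: ∑_{j<p} C(p,j+1) * (-t)^j = 0
  have H : ∑ j ∈ Finset.range p, ((p.choose (j + 1) : ℕ) : AddMonoid.End M) * (-t) ^ j = 0 := by
    have h := geom_expand t p
    rw [← hst, hν0] at h
    simp only [nsmul_eq_mul] at h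
    exact h.symm
  have hp2 : 2 ≤ p := hp.two_le
  have hp1 : p - 1 + 1 = p := by omega
  have hp21 : p - 2 + 1 = p - 1 := by omega
  -- c : the cofactor with p = c * t
  set c : AddMonoid.End M :=
    ∑ j ∈ Finset.range (p - 1), ((p.choose (j + 1 + 1) : ℕ) : AddMonoid.End M) * (-t) ^ j with hc
  have hct : Commute t c := by
    rw [hc]
    exact Commute.sum_right _ _ _ fun j _ =>
      Commute.mul_right (Nat.cast_commute _ t).symm (((Commute.refl t).neg_right).pow_right j)
  have H1 : (p : AddMonoid.End M) = c * t := by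
    have hsplit := Finset.sum_range_succ'
      (fun j => ((p.choose (j + 1) : ℕ) : AddMonoid.End M) * (-t) ^ j) (p - 1)
    rw [hp1, H] at hsplit
    simp only [pow_zero, mul_one, Nat.choose_one_right] at hsplit
    have hrw : ∑ j ∈ Finset.range (p - 1),
        ((p.choose (j + 1 + 1) : ℕ) : AddMonoid.End M) * (-t) ^ (j + 1) = c * (-t) := by
      rw [hc, Finset.sum_mul]
      refine Finset.sum_congr rfl fun j _ => ?_
      rw [pow_succ, mul_assoc]
    rw [hrw, mul_neg] at hsplit
    have h2 := congrArg (fun z => c * t + z) hsplit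
    simpa using h2.symm
  -- d : c = p * d + (-t)^(p-2)
  set d : AddMonoid.End M :=
    ∑ j ∈ Finset.range (p - 2),
      (((p.choose (j + 1 + 1) / p : ℕ)) : AddMonoid.End M) * (-t) ^ j with hd
  have hdt : Commute t d := by
    rw [hd]
    exact Commute.sum_right _ _ _ fun j _ =>
      Commute.mul_right (Nat.cast_commute _ t).symm (((Commute.refl t).neg_right).pow_right j)
  have H2 : c = (p : AddMonoid.End M) * d + (-t) ^ (p - 2) := by
    rw [hc, ← hp21, Finset.sum_range_succ]
    congr 1
    · rw [hd, Finset.mul_sum]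
      refine Finset.sum_congr rfl fun j hj => ?_
      have hjlt : j < p - 2 := Finset.mem_range.mp hj
      have hdvd : p ∣ p.choose (j + 1 + 1) :=
        hp.dvd_choose_self (by omega) (by omega)
      rw [← mul_assoc, ← Nat.cast_mul, Nat.mul_div_cancel' hdvd]
    · have h3 : p - 2 + 1 + 1 = p := by omega
      rw [h3, Nat.choose_self, Nat.cast_one, one_mul]
  -- main identity : t^(p-1) = p * u with u a unit candidate
  set u : AddMonoid.End M := (-1 : AddMonoid.End M) ^ (p - 2) * (1 - t * d) with hu
  have hA : (-1 : AddMonoid.End M) ^ (p - 2) * (-t) ^ (p - 2) = t ^ (p - 2) := by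
    rw [neg_pow t, ← mul_assoc, ← (Commute.refl (-1 : AddMonoid.End M)).mul_pow]
    simp
  have hB : (-t) ^ (p - 2) = c - (p : AddMonoid.End M) * d := by
    rw [H2, add_sub_cancel_left]
  have hC : (c - (p : AddMonoid.End M) * d) * t
      = (p : AddMonoid.End M) * (1 - t * d) := by
    rw [sub_mul, ← H1, mul_assoc, ← hdt.eq, mul_sub, mul_one]
  have H3 : t ^ (p - 1) = (p : AddMonoid.End M) * u := by
    have h1 : t ^ (p - 1) = t ^ (p - 2) * t := by rw [← pow_succ, hp21]
    rw [h1, ← hA, hB, mul_assoc, hC, ← mul_assoc,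
      ((Nat.cast_commute p ((-1 : AddMonoid.End M) ^ (p - 2))).symm).eq, mul_assoc, hu]
  -- exponent bound
  have hFin : Fintype M := Fintype.ofFinite M
  obtain ⟨N, hN⟩ : ∃ N : ℕ, ∀ y : M, p ^ N • y = 0 := by
    refine ⟨Finset.univ.sup fun y : M => (hpgrp y).choose, fun y => ?_⟩
    have hle : (hpgrp y).choose ≤ Finset.univ.sup fun y : M => (hpgrp y).choose :=
      Finset.le_sup (f := fun y : M => (hpgrp y).choose) (Finset.mem_univ y)
    obtain ⟨m, hm⟩ := Nat.exists_eq_add_of_le hle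
    rw [hm, add_comm ((hpgrp y).choose) m, pow_add, mul_smul, (hpgrp y).choose_spec, smul_zero]
  have hcastzero : ((p ^ N : ℕ) : AddMonoid.End M) = 0 := by
    refine AddMonoid.End.ext M fun y => ?_
    rw [AddMonoid.End.natCast_apply]
    exact hN y
  -- t is nilpotent
  have htnil : IsNilpotent t := by
    refine ⟨(p - 1) * N, ?_⟩
    rw [pow_mul, H3, (Nat.cast_commute p u).mul_pow, ← Nat.cast_pow, hcastzero, zero_mul]
  -- u is a unit
  have huunit : IsUnit u := by
    rw [hu]
    exact IsUnit.mul (IsUnit.pow _ isUnit_one.neg)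
      (IsNilpotent.isUnit_one_sub (hdt.isNilpotent_mul_right htnil))
  -- conclusion
  intro k x
  have hkey : t ^ (k * (p - 1)) = u ^ k * ((p ^ k : ℕ) : AddMonoid.End M) := by
    rw [mul_comm k, pow_mul, H3, (Nat.cast_commute p u).mul_pow, ← Nat.cast_pow,
      (Nat.cast_commute (p ^ k : ℕ) (u ^ k)).eq]
  have happ : (t ^ (k * (p - 1))) x = (u ^ k) (p ^ k • x) := by
    rw [hkey]
    rfl
  constructor
  · intro h
    rw [happ, h, map_zero]
  · intro h
    obtain ⟨w, hw⟩ := huunit.pow k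
    have h2 : p ^ k • x = (↑w⁻¹ : AddMonoid.End M) ((u ^ k) (p ^ k • x)) := by
      conv_lhs => rw [show p ^ k • x = (1 : AddMonoid.End M) (p ^ k • x) from rfl]
      rw [← Units.inv_mul w, hw]
      rfl
    rw [h2, ← happ, h, map_zero]
end

section
/- Let p be a prime, G = ⟨σ⟩ cyclic of order p, and M a finite ℤ_p[G]-module with filtration M_i = ker((1-σ)^i) and n the least integer with M_n = M. Assume #M₁ = p (where M₁ = M^G). Then for every k ≥ 1 there is an exact sequence 1 → (M₁ ∩ M^{p^{k-1}})/(M₁ ∩ M^{p^k}) → M^{p^{k-1}}/M^{p^k} → M_{n-1}^{p^{k-1}}/M_{n-1}^{p^k} → 1, where the right-hand map is induced by 1-σ. -/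
/-- The subgroup `q·S` of `q`-th "powers" (multiples) of a subgroup `S`. -/
def Ppow {M : Type*} [AddCommGroup M] (S : AddSubgroup M) (q : ℕ) : AddSubgroup M :=
  S.map (show AddMonoid.End M from (q : AddMonoid.End M))

section Aux

variable {M : Type*} [AddCommGroup M]

lemma end_natCast_apply (q : ℕ) (x : M) : (q : AddMonoid.End M) x = q • x := by
  simp [AddMonoid.End.natCast_apply]

lemma mem_Ppow_iff {S : AddSubgroup M} {q : ℕ} {y : M} :
    y ∈ Ppow S q ↔ ∃ x ∈ S, q • x = y := by
  simp only [Ppow, AddSubgroup.mem_map]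
  constructor
  · rintro ⟨x, hx, rfl⟩
    exact ⟨x, hx, (end_natCast_apply q x).symm⟩
  · rintro ⟨x, hx, rfl⟩
    exact ⟨x, hx, end_natCast_apply q x⟩

lemma Ppow_mono {S T : AddSubgroup M} (h : S ≤ T) (q : ℕ) : Ppow S q ≤ Ppow T q :=
  AddSubgroup.map_mono h

lemma Ppow_mul_le (S : AddSubgroup M) (a b : ℕ) : Ppow S (a * b) ≤ Ppow S b := by
  intro y hy
  obtain ⟨x, hx, rfl⟩ := mem_Ppow_iff.mp hy
  exact mem_Ppow_iff.mpr ⟨a • x, S.nsmul_mem hx a, by rw [smul_smul, Nat.mul_comm]⟩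

lemma map_Ppow (φ : M →+ M) (S : AddSubgroup M) (q : ℕ) :
    (Ppow S q).map φ = Ppow (S.map φ) q := by
  ext y
  rw [AddSubgroup.mem_map, mem_Ppow_iff]
  constructor
  · rintro ⟨z, hz, rfl⟩
    obtain ⟨x, hx, rfl⟩ := mem_Ppow_iff.mp hz
    exact ⟨φ x, AddSubgroup.mem_map_of_mem φ hx, (map_nsmul φ q x).symm⟩
  · rintro ⟨w, hw, rfl⟩
    obtain ⟨x, hx, rfl⟩ := AddSubgroup.mem_map.mp hw
    exact ⟨q • x, mem_Ppow_iff.mpr ⟨x, hx, rfl⟩, map_nsmul φ q x⟩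

lemma Ppow_top_map_eq_range (φ : M →+ M) (q : ℕ) :
    (Ppow (⊤ : AddSubgroup M) q).map φ = Ppow φ.range q := by
  rw [map_Ppow]; congr 1; simp [AddMonoidHom.range_eq_map]

end Aux

/-- Lemma on the filtration: for `G = ⟨σ⟩` of order `p` acting on a finite abelian
`p`-group `M` with `#M^G = p` and `n` least with `ker((1-σ)^n) = M`, for every `k ≥ 1`
there is an exact sequence
`1 → (M₁∩M^{p^{k-1}})/(M₁∩M^{p^k}) → M^{p^{k-1}}/M^{p^k} → M_{n-1}^{p^{k-1}}/M_{n-1}^{p^k} → 1`,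
the first map induced by inclusion and the second by `1-σ` (here `M_{n-1} = ker((1-σ)^{n-1})`). -/
theorem stmt10 {M : Type*} [AddCommGroup M] [Finite M] (p : ℕ) (hp : p.Prime)
    (σ : AddAut M) (hσ : p • σ = 0)
    (hpgrp : ∀ x : M, ∃ j : ℕ, p ^ j • x = 0)
    (hM1 : Nat.card (AddMonoidHom.ker (oneSubSigma σ)) = p)
    (n : ℕ) (hn : AddMonoidHom.ker ((oneSubSigma σ) ^ n) = ⊤)
    (hmin : ∀ m < n, AddMonoidHom.ker ((oneSubSigma σ) ^ m) ≠ ⊤)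
    (k : ℕ) (hk : 1 ≤ k) :
    ∃ (f : (↥(AddMonoidHom.ker (oneSubSigma σ) ⊓ Ppow (⊤ : AddSubgroup M) (p ^ (k - 1))) ⧸
            (AddMonoidHom.ker (oneSubSigma σ) ⊓ Ppow (⊤ : AddSubgroup M) (p ^ k)).addSubgroupOf
              (AddMonoidHom.ker (oneSubSigma σ) ⊓ Ppow (⊤ : AddSubgroup M) (p ^ (k - 1)))) →+
          (↥(Ppow (⊤ : AddSubgroup M) (p ^ (k - 1))) ⧸
            (Ppow (⊤ : AddSubgroup M) (p ^ k)).addSubgroupOf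
              (Ppow (⊤ : AddSubgroup M) (p ^ (k - 1)))))
      (g : (↥(Ppow (⊤ : AddSubgroup M) (p ^ (k - 1))) ⧸
            (Ppow (⊤ : AddSubgroup M) (p ^ k)).addSubgroupOf
              (Ppow (⊤ : AddSubgroup M) (p ^ (k - 1)))) →+
          (↥(Ppow (AddMonoidHom.ker ((oneSubSigma σ) ^ (n - 1))) (p ^ (k - 1))) ⧸
            (Ppow (AddMonoidHom.ker ((oneSubSigma σ) ^ (n - 1))) (p ^ k)).addSubgroupOf
              (Ppow (AddMonoidHom.ker ((oneSubSigma σ) ^ (n - 1))) (p ^ (k - 1))))),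
      Function.Injective f ∧ Function.Surjective g ∧
      AddMonoidHom.ker g = AddMonoidHom.range f ∧
      (∀ (x : M) (hx : x ∈ AddMonoidHom.ker (oneSubSigma σ) ⊓
            Ppow (⊤ : AddSubgroup M) (p ^ (k - 1)))
          (hx' : x ∈ Ppow (⊤ : AddSubgroup M) (p ^ (k - 1))),
        f (QuotientAddGroup.mk ⟨x, hx⟩) = QuotientAddGroup.mk ⟨x, hx'⟩) ∧
      (∀ (x : M) (hx : x ∈ Ppow (⊤ : AddSubgroup M) (p ^ (k - 1)))
          (hdx : (oneSubSigma σ) x ∈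
            Ppow (AddMonoidHom.ker ((oneSubSigma σ) ^ (n - 1))) (p ^ (k - 1))),
        g (QuotientAddGroup.mk ⟨x, hx⟩) =
          QuotientAddGroup.mk ⟨(oneSubSigma σ) x, hdx⟩) := by
  classical
  have hfp : Fact p.Prime := ⟨hp⟩
  set D : AddMonoid.End M := oneSubSigma σ with hDdef
  -- basic notation
  set M1 : AddSubgroup M := AddMonoidHom.ker D with hM1def
  set K : AddSubgroup M := AddMonoidHom.ker (D ^ (n - 1)) with hKdef
  -- n ≠ 0
  have hn0 : n ≠ 0 := by
    rintro rfl
    have : ∀ x : M, x = 0 := by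
      intro x
      have hx : x ∈ AddMonoidHom.ker ((D : AddMonoid.End M) ^ 0) := hn ▸ AddSubgroup.mem_top x
      have hx0 : (1 : AddMonoid.End M) x = 0 := AddMonoidHom.mem_ker.mp hx
      exact hx0
    have : Nat.card M1 = 1 := by
      have : Subsingleton M := ⟨fun a b => by rw [this a, this b]⟩
      simp [Nat.card_eq_one_iff_unique]
    rw [hM1] at this
    exact hp.one_lt.ne' this
  -- every D x lies in K
  have hDK : ∀ x : M, D x ∈ K := by
    intro x
    have hpow : (D : AddMonoid.End M) ^ n = D ^ (n - 1) * D := by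
      conv_lhs => rw [← Nat.sub_add_cancel (Nat.one_le_iff_ne_zero.mpr hn0)]
      rw [pow_succ]
    have hx : x ∈ AddMonoidHom.ker ((D : AddMonoid.End M) ^ n) := by rw [hn]; trivial
    have hxx := AddMonoidHom.mem_ker.mp hx
    rw [hpow] at hxx
    exact AddMonoidHom.mem_ker.mpr hxx
  have hrangeK : (D : M →+ M).range ≤ K := by
    rintro x ⟨y, rfl⟩
    exact hDK y
  -- cardinality: K ≤ range D
  have hKrange : K ≤ (D : M →+ M).range := by
    obtain ⟨j, hj⟩ : ∃ j, Nat.card M = p ^ j := by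
      have hpg : IsPGroup p (Multiplicative M) := fun x => by
        obtain ⟨j, hjx⟩ := hpgrp (Multiplicative.toAdd x)
        exact ⟨j, hjx⟩
      obtain ⟨j, hj⟩ := IsPGroup.iff_card.mp hpg
      exact ⟨j, hj⟩
    have hcardM : Nat.card M = Nat.card (D : M →+ M).range * p := by
      have h1 := AddSubgroup.card_eq_card_quotient_mul_card_addSubgroup
        (AddMonoidHom.ker (D : M →+ M))
      have h2 : Nat.card (M ⧸ AddMonoidHom.ker (D : M →+ M)) =
          Nat.card (D : M →+ M).range :=
        Nat.card_congr (QuotientAddGroup.quotientKerEquivRange (D : M →+ M)).toEquiv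
      rw [h1, h2]
      congr 1
    have hj1 : 1 ≤ j := by
      by_contra h
      have hj0 : j = 0 := by omega
      have : p ∣ Nat.card M := ⟨Nat.card (D : M →+ M).range, by rw [hcardM, Nat.mul_comm]⟩
      rw [hj, hj0, pow_zero] at this
      exact hp.one_lt.not_ge (Nat.le_of_dvd Nat.one_pos this)
    have hrange : Nat.card (D : M →+ M).range = p ^ (j - 1) := by
      have : p ^ (j - 1) * p = Nat.card (D : M →+ M).range * p := by
        rw [← hcardM, hj, ← pow_succ, Nat.sub_add_cancel hj1]
      exact (Nat.eq_of_mul_eq_mul_right hp.pos this).symm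
    have hKne : K ≠ ⊤ := hmin (n - 1) (by omega)
    have hKdvd : Nat.card K ∣ p ^ j := by
      have h := AddSubgroup.card_dvd_of_le (le_top : K ≤ ⊤)
      have h2 : Nat.card (⊤ : AddSubgroup M) = Nat.card M :=
        Nat.card_congr AddSubgroup.topEquiv.toEquiv
      rw [h2, hj] at h
      exact h
    obtain ⟨a, haj, hKa⟩ := (Nat.dvd_prime_pow hp).mp hKdvd
    have haj' : a < j := by
      rcases Nat.lt_or_ge a j with h | h
      · exact h
      · exfalso
        have : a = j := le_antisymm haj h
        exact hKne (AddSubgroup.eq_top_of_card_eq _ (by rw [hKa, this, hj]))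
    have hKle : Nat.card K ≤ Nat.card (D : M →+ M).range := by
      rw [hKa, hrange]
      exact Nat.pow_le_pow_right hp.pos (by omega)
    have hcards : Nat.card (D : M →+ M).range = Nat.card K :=
      le_antisymm (Nat.le_of_dvd Nat.card_pos (AddSubgroup.card_dvd_of_le hrangeK)) hKle
    have htop : ((D : M →+ M).range.addSubgroupOf K) = ⊤ := by
      apply AddSubgroup.eq_top_of_card_eq
      rw [Nat.card_congr (AddSubgroup.addSubgroupOfEquivOfLe hrangeK).toEquiv, hcards]
    exact AddSubgroup.addSubgroupOf_eq_top.mp htop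
  -- abbreviations for the four subgroups
  have hpk : p ^ k = p * p ^ (k - 1) := by
    rw [← pow_succ']
    congr 1
    omega
  have hPle : Ppow (⊤ : AddSubgroup M) (p ^ k) ≤ Ppow (⊤ : AddSubgroup M) (p ^ (k - 1)) := by
    rw [hpk]; exact Ppow_mul_le _ _ _
  have hKPle : ∀ m : ℕ, Ppow K m ≤ (Ppow (⊤ : AddSubgroup M) m).map (D : M →+ M) := by
    intro m
    exact (Ppow_mono hKrange m).trans (Ppow_top_map_eq_range D m).ge
  have hDmem : ∀ m : ℕ, ∀ x ∈ Ppow (⊤ : AddSubgroup M) m, D x ∈ Ppow K m := by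
    intro m x hx
    obtain ⟨y, -, rfl⟩ := mem_Ppow_iff.mp hx
    exact mem_Ppow_iff.mpr ⟨D y, hDK y, by rw [← map_nsmul]⟩
  -- the maps
  set A := M1 ⊓ Ppow (⊤ : AddSubgroup M) (p ^ (k - 1)) with hAdef
  set B := M1 ⊓ Ppow (⊤ : AddSubgroup M) (p ^ k) with hBdef
  set Pq := Ppow (⊤ : AddSubgroup M) (p ^ (k - 1)) with hPqdef
  set Ppq := Ppow (⊤ : AddSubgroup M) (p ^ k) with hPpqdef
  set Kq := Ppow K (p ^ (k - 1)) with hKqdef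
  set Kpq := Ppow K (p ^ k) with hKpqdef
  have hincl : B.addSubgroupOf A ≤
      (Ppq.addSubgroupOf Pq).comap (AddSubgroup.inclusion (inf_le_right : A ≤ Pq)) := by
    intro x hx
    rw [AddSubgroup.mem_comap]
    rw [AddSubgroup.mem_addSubgroupOf] at hx ⊢
    exact hx.2
  set f := QuotientAddGroup.map (B.addSubgroupOf A) (Ppq.addSubgroupOf Pq)
    (AddSubgroup.inclusion (inf_le_right : A ≤ Pq)) hincl with hfdef
  set dmap : ↥Pq →+ ↥Kq :=
    AddMonoidHom.codRestrict ((D : M →+ M).comp Pq.subtype) Kq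
      (fun a => hDmem _ a.1 a.2) with hdmapdef
  have hgcond : Ppq.addSubgroupOf Pq ≤ (Kpq.addSubgroupOf Kq).comap dmap := by
    intro x hx
    rw [AddSubgroup.mem_comap]
    rw [AddSubgroup.mem_addSubgroupOf] at hx ⊢
    exact hDmem _ x.1 hx
  set g := QuotientAddGroup.map (Ppq.addSubgroupOf Pq) (Kpq.addSubgroupOf Kq) dmap hgcond
    with hgdef
  refine ⟨f, g, ?_, ?_, ?_, ?_, ?_⟩
  · -- injectivity of f
    rw [injective_iff_map_eq_zero]
    intro c hc
    induction c using QuotientAddGroup.induction_on with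
    | H b =>
      rw [hfdef, QuotientAddGroup.map_mk, QuotientAddGroup.eq_zero_iff,
        AddSubgroup.mem_addSubgroupOf] at hc
      rw [QuotientAddGroup.eq_zero_iff, AddSubgroup.mem_addSubgroupOf]
      exact ⟨b.2.1, hc⟩
  · -- surjectivity of g
    intro c
    induction c using QuotientAddGroup.induction_on with
    | H b =>
      obtain ⟨x, hx, hxb⟩ := hKPle _ b.2
      refine ⟨QuotientAddGroup.mk ⟨x, hx⟩, ?_⟩
      rw [hgdef, QuotientAddGroup.map_mk]
      congr 1
      exact Subtype.ext hxb
  · -- exactness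
    ext c
    constructor
    · intro hc
      rw [AddMonoidHom.mem_ker] at hc
      induction c using QuotientAddGroup.induction_on with
      | H b =>
        rw [hgdef, QuotientAddGroup.map_mk, QuotientAddGroup.eq_zero_iff,
          AddSubgroup.mem_addSubgroupOf] at hc
        have hc' : (dmap b : M) ∈ Ppq.map (D : M →+ M) := hKPle _ hc
        obtain ⟨y, hy, hyb⟩ := hc'
        have hdb : (dmap b : M) = D b.1 := rfl
        have hDzero : (D : M →+ M) (b.1 - y) = 0 := by
          rw [map_sub]; exact sub_eq_zero.mpr (hdb.symm.trans hyb.symm)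
        have hbA : b.1 - y ∈ A :=
          ⟨AddMonoidHom.mem_ker.mpr hDzero, Pq.sub_mem b.2 (hPle hy)⟩
        refine ⟨QuotientAddGroup.mk ⟨b.1 - y, hbA⟩, ?_⟩
        rw [hfdef, QuotientAddGroup.map_mk]
        rw [QuotientAddGroup.eq]
        rw [AddSubgroup.mem_addSubgroupOf]
        show -(b.1 - y) + b.1 ∈ Ppq
        have : -(b.1 - y) + b.1 = y := by abel
        rw [this]
        exact hy
    · rintro ⟨c0, rfl⟩
      rw [AddMonoidHom.mem_ker]
      induction c0 using QuotientAddGroup.induction_on with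
      | H b =>
        rw [hfdef, QuotientAddGroup.map_mk, hgdef, QuotientAddGroup.map_mk]
        rw [QuotientAddGroup.eq_zero_iff, AddSubgroup.mem_addSubgroupOf]
        have : (dmap (AddSubgroup.inclusion inf_le_right b) : M) = D b.1 := rfl
        rw [this]
        have hb0 : D b.1 = 0 := b.2.1
        rw [hb0]
        exact Kpq.zero_mem
  · -- formula for f
    intro x hx hx'
    rw [hfdef, QuotientAddGroup.map_mk]
    rfl
  · -- formula for g
    intro x hx hdx
    rw [hgdef, QuotientAddGroup.map_mk]
    rfl
end

section
/- Let p be a prime, G = ⟨σ⟩ cyclic of order p, and M a finite ℤ_p[G]-module with M^ν ≠ 1, #M^G = p, and n the least integer with ker((1-σ)^n) = M. If n = p, then M is isomorphic as an abelian group to either (ℤ/pℤ)^p or ℤ/p²ℤ ⊕ (ℤ/pℤ)^{p-2}. -/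
open Polynomial



lemma polyG (p : ℕ) (hp : p.Prime) :
    ∃ z : ℤ[X], (1 - X ^ p) - (1 - X) ^ p
      = C (p : ℤ) * ((X - C 1) * ((X - C 1) * z - C 1)) := by
  haveI : Fact p.Prime := ⟨hp⟩
  set G : ℤ[X] := (1 - X ^ p) - (1 - X) ^ p with hG
  have hmap : G.map (Int.castRingHom (ZMod p)) = 0 := by
    have : ((1 : (ZMod p)[X]) - X) ^ p = 1 - X ^ p := by
      rw [sub_pow_char]
      simp
    simp [hG, Polynomial.map_sub, Polynomial.map_pow, this]
  have hdvd : C (p : ℤ) ∣ G := by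
    rw [Polynomial.C_dvd_iff_dvd_coeff]
    intro i
    have : (G.coeff i : ZMod p) = 0 := by
      have := congrArg (fun q => Polynomial.coeff q i) hmap
      simpa [Polynomial.coeff_map] using this
    exact_mod_cast (ZMod.intCast_zmod_eq_zero_iff_dvd _ _).mp this
  obtain ⟨H, hH⟩ := hdvd
  have hp0 : (p : ℤ) ≠ 0 := by exact_mod_cast hp.ne_zero
  have hp1 : p - 1 ≠ 0 := Nat.sub_ne_zero_of_lt hp.one_lt
  have hHroot : H.IsRoot 1 := by
    have hGeval : G.eval 1 = 0 := by
      simp [hG, zero_pow hp.ne_zero]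
    rw [hH] at hGeval
    simpa [hp0, hp.ne_zero] using hGeval
  obtain ⟨W, hW⟩ := (Polynomial.dvd_iff_isRoot).mpr hHroot
  have hWeval : W.eval 1 = -1 := by
    have hd : derivative G = -(C (p:ℤ) * X ^ (p-1)) + C (p:ℤ) * (1 - X) ^ (p-1) := by
      rw [hG, derivative_sub, derivative_sub, derivative_one, derivative_X_pow,
        derivative_pow, derivative_sub, derivative_one, derivative_X]
      push_cast
      ring
    have hder : (derivative G).eval 1 = -(p : ℤ) := by
      rw [hd]
      simp [zero_pow hp1]
    have hd2 : derivative G = C (p:ℤ) * (W + (X - C 1) * derivative W) := by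
      rw [hH, hW, derivative_C_mul, derivative_mul, derivative_sub, derivative_X,
        derivative_C]
      ring
    rw [hd2] at hder
    have h3 : (p:ℤ) * (W.eval 1) = (p:ℤ) * (-1) := by
      simpa using hder.trans (by ring : -(p:ℤ) = (p:ℤ) * (-1))
    exact mul_left_cancel₀ hp0 h3
  have : (X - C 1 : ℤ[X]) ∣ (W - C (-1)) := by
    rw [Polynomial.dvd_iff_isRoot]
    simp [Polynomial.IsRoot, hWeval]
  obtain ⟨z, hz⟩ := this
  refine ⟨z, ?_⟩
  rw [hH, hW]
  have hWz : W = (X - C 1) * z - C 1 := by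
    have h4 := hz
    rw [sub_eq_iff_eq_add] at h4
    rw [h4]
    simp [sub_eq_add_neg]
  rw [hWz]

lemma keyC {M : Type*} [AddCommGroup M] (p : ℕ) (hp : p.Prime) (s : AddMonoid.End M)
    (hs : s ^ p = 1) (ht : (1 - s) ^ p = 0) :
    (p : AddMonoid.End M) * (1 - s) = 0 := by
  obtain ⟨z, hz⟩ := polyG p hp
  have happ := congrArg (Polynomial.aeval (R := ℤ) s) hz
  set v : AddMonoid.End M := Polynomial.aeval (R := ℤ) s z with hv
  have hL : Polynomial.aeval (R := ℤ) s ((1 - X ^ p) - (1 - X) ^ p) = 0 := by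
    simp [map_sub, map_pow, hs, ht]
  have hR : Polynomial.aeval (R := ℤ) s (C (p : ℤ) * ((X - C 1) * ((X - C 1) * z - C 1)))
      = (p : AddMonoid.End M) * ((s - 1) * ((s - 1) * v - 1)) := by
    simp [map_mul, map_sub, map_one, hv]
  rw [hL, hR] at happ
  have hcomm : Commute (1 - s) v := by
    have : (1 - s : AddMonoid.End M) = Polynomial.aeval (R := ℤ) s (1 - X) := by simp
    rw [this, hv]
    exact (Commute.all _ _).map _
  have hnil : IsNilpotent ((1 - s) * v) := ⟨p, by rw [hcomm.mul_pow, ht, zero_mul]⟩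
  have hu : IsUnit ((s - 1) * v - 1) := by
    have : ((s - 1) * v - 1 : AddMonoid.End M) = -(1 + (1 - s) * v) := by noncomm_ring
    rw [this]
    exact (hnil.isUnit_one_add).neg
  have h0 : ((p : AddMonoid.End M) * (s - 1)) * ((s - 1) * v - 1) = 0 := by
    rw [mul_assoc]; exact happ.symm
  have h1 : (p : AddMonoid.End M) * (s - 1) = 0 := (hu.mul_left_eq_zero).mp h0
  have : (p : AddMonoid.End M) * (1 - s) = -((p : AddMonoid.End M) * (s - 1)) := by noncomm_ring
  rw [this, h1, neg_zero]

lemma key1 {M : Type*} [AddCommGroup M] (p : ℕ) (hp : p.Prime) (σ : AddAut M)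
    (hσ : p • σ = 0) (hker : AddMonoidHom.ker ((oneSubSigma σ) ^ p) = ⊤) :
    ∀ x : M, p • x ∈ AddMonoidHom.ker (oneSubSigma σ) := by
  set s : AddMonoid.End M := (AddEquiv.toAddMonoidHom σ : AddMonoid.End M) with hsdef
  have hpow : ∀ (k : ℕ) (x : M), (s ^ k) x = (k • σ) x := by
    intro k
    induction k with
    | zero => intro x; simp
    | succ k ih =>
      intro x
      rw [pow_succ, succ_nsmul]
      have h1 : (s ^ k * s) x = (s ^ k) (s x) := rfl
      have h2 : ((k • σ + σ) : AddAut M) x = (k • σ) (σ x) := rfl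
      rw [h1, h2, ih]
      rfl
  have hs : s ^ p = 1 := by
    refine AddMonoidHom.ext fun x => ?_
    exact (hpow p x).trans (by rw [hσ]; rfl)
  have ht : (1 - s) ^ p = 0 := by
    refine AddMonoidHom.ext fun x => ?_
    have hx : x ∈ AddMonoidHom.ker ((oneSubSigma σ) ^ p) := by rw [hker]; trivial
    have : oneSubSigma σ = 1 - s := rfl
    rw [this] at hx
    exact AddMonoidHom.mem_ker.mp hx
  have h0 := keyC p hp s hs ht
  intro x
  show (oneSubSigma σ) (p • x) = 0
  have : oneSubSigma σ = 1 - s := rfl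
  rw [this]
  have h1 : (1 - s) (p • x) = ((1 - s) * (p : AddMonoid.End M)) x := by
    have : (p : AddMonoid.End M) x = p • x := rfl
    rw [← this]
    rfl
  rw [h1, ((Nat.cast_commute p (1 - s)).eq).symm, h0]
  rfl


lemma cardM {M : Type*} [AddCommGroup M] [Finite M] (p n : ℕ) (hp : p.Prime)
    (τ : AddMonoid.End M) (hpcard : ∃ k, Nat.card M = p ^ k)
    (h1 : Nat.card (AddMonoidHom.ker τ) = p)
    (hn : AddMonoidHom.ker (τ ^ n) = ⊤)
    (hmin : ∀ m < n, AddMonoidHom.ker (τ ^ m) ≠ ⊤) :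
    Nat.card M = p ^ n := by
  classical
  set K : ℕ → AddSubgroup M := fun i => AddMonoidHom.ker (τ ^ i) with hK
  have happ : ∀ (a b : ℕ) (x : M), (τ ^ (a + b)) x = (τ ^ a) ((τ ^ b) x) := by
    intro a b x; rw [pow_add]; rfl
  have hmono : ∀ i j, i ≤ j → K i ≤ K j := by
    have : Monotone K := monotone_nat_of_le_succ (by
      intro i x hx
      have hx' : (τ ^ i) x = 0 := hx
      show (τ ^ (i + 1)) x = 0
      rw [add_comm, happ 1 i x, hx']
      simp)
    exact fun i j h => this h
  -- upper bound
  have hupper : ∀ i, Nat.card (K (i+1)) ≤ p * Nat.card (K i) := by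
    intro i
    set g : K (i+1) →+ M := (τ : M →+ M).comp (AddSubgroup.subtype (K (i+1))) with hg
    have hrange : g.range ≤ K i := by
      rintro - ⟨⟨x, hx⟩, rfl⟩
      show (τ ^ i) (τ x) = 0
      have e : (τ ^ (i+1)) x = (τ ^ i) (τ x) := by rw [happ i 1 x, pow_one]
      rw [← e]
      exact hx
    have hkerg : g.ker = (AddMonoidHom.ker τ).addSubgroupOf (K (i+1)) := by
      ext x
      simp [hg, AddMonoidHom.mem_ker, AddSubgroup.mem_addSubgroupOf]
      exact Iff.rfl
    have hle : AddMonoidHom.ker τ ≤ K (i+1) := by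
      have : AddMonoidHom.ker τ = K 1 := by rw [hK]; simp
      rw [this]; exact hmono 1 (i+1) (by omega)
    have hcardker : Nat.card g.ker = p := by
      rw [hkerg, ← h1]
      exact Nat.card_congr (AddSubgroup.addSubgroupOfEquivOfLe hle).toEquiv
    have hcards := AddSubgroup.card_eq_card_quotient_mul_card_addSubgroup g.ker
    have hquot : Nat.card (↥(K (i+1)) ⧸ g.ker) = Nat.card g.range :=
      Nat.card_congr (QuotientAddGroup.quotientKerEquivRange g).toEquiv
    have hrle : Nat.card g.range ≤ Nat.card (K i) := AddSubgroup.card_le_of_le hrange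
    calc Nat.card (K (i+1)) = Nat.card (↥(K (i+1)) ⧸ g.ker) * Nat.card g.ker := hcards
    _ = Nat.card g.range * p := by rw [hquot, hcardker]
    _ ≤ Nat.card (K i) * p := Nat.mul_le_mul_right _ hrle
    _ = p * Nat.card (K i) := Nat.mul_comm _ _
  have hcard0 : Nat.card (K 0) = 1 := by
    have : K 0 = ⊥ := by
      ext x
      simp [hK]
      rfl
    rw [this]
    simp
  have hub : ∀ i, Nat.card (K i) ≤ p ^ i := by
    intro i
    induction i with
    | zero => simp [hcard0]
    | succ i ih =>
      calc Nat.card (K (i+1)) ≤ p * Nat.card (K i) := hupper i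
      _ ≤ p * p ^ i := Nat.mul_le_mul_left _ ih
      _ = p ^ (i+1) := by ring
  -- strictness
  have hstab : ∀ i, K i = K (i+1) → ∀ m, K (i + m) ≤ K i := by
    intro i hi m
    induction m with
    | zero => exact le_refl _
    | succ m ih =>
      intro x hx
      have hx' : (τ ^ (i + m + 1)) x = 0 := hx
      have h2 : (τ ^ (i+1)) ((τ ^ m) x) = 0 := by
        rw [← happ (i+1) m x]
        rw [show i + 1 + m = i + m + 1 by omega]
        exact hx'
      have h3 : (τ ^ m) x ∈ K (i+1) := h2
      rw [← hi] at h3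
      have h4 : (τ ^ (i + m)) x = 0 := by
        rw [happ i m x]
        exact h3
      exact ih h4
  have hne : ∀ i, i < n → K i ≠ K (i+1) := by
    intro i hi heq
    have h5 : K n ≤ K i := by
      have := hstab i heq (n - i)
      rwa [show i + (n - i) = n by omega] at this
    have htopn : K n = ⊤ := hn
    rw [htopn] at h5
    exact hmin i hi (top_le_iff.mp h5)
  -- lower bound
  obtain ⟨kM, hkM⟩ := hpcard
  have hppow : ∀ i, ∃ a, Nat.card (K i) = p ^ a := by
    intro i
    have hdvd : Nat.card (K i) ∣ Nat.card M := AddSubgroup.card_addSubgroup_dvd_card _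
    rw [hkM] at hdvd
    obtain ⟨a, -, ha⟩ := (Nat.dvd_prime_pow hp).mp hdvd
    exact ⟨a, ha⟩
  have hlb : ∀ i, i ≤ n → p ^ i ≤ Nat.card (K i) := by
    intro i
    induction i with
    | zero => intro _; rw [pow_zero, hcard0]
    | succ i ih =>
      intro hin
      have hlt : Nat.card (K i) < Nat.card (K (i+1)) := by
        have hss : (K i : Set M) ⊂ (K (i+1) : Set M) := by
          refine ⟨hmono i (i+1) (by omega), fun hsub => hne i (by omega) ?_⟩
          exact le_antisymm (hmono i (i+1) (by omega)) hsub
        have := Set.ncard_lt_ncard hss (Set.toFinite _)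
        rw [← Nat.card_coe_set_eq, ← Nat.card_coe_set_eq] at this; exact this
      obtain ⟨a, ha⟩ := hppow i
      obtain ⟨b, hb⟩ := hppow (i+1)
      have hia : p ^ i ≤ p ^ a := ha ▸ ih (by omega)
      have hab : a < b := by
        have := ha ▸ hb ▸ hlt
        exact (Nat.pow_lt_pow_iff_right hp.one_lt).mp this
      have : i ≤ a := (Nat.pow_le_pow_iff_right hp.one_lt).mp hia
      rw [hb]
      exact Nat.pow_le_pow_right hp.pos (by omega)
  have htop : Nat.card (K n) = Nat.card M := by
    rw [hK]
    simp only [hn]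
    exact Nat.card_congr AddSubgroup.topEquiv.toEquiv
  exact le_antisymm (htop ▸ hub n) (htop ▸ hlb n (le_refl n))


lemma elemAbelian {M : Type*} [AddCommGroup M] [Finite M] (p d : ℕ) (hp : p.Prime)
    (hcard : Nat.card M = p ^ d) (hel : ∀ x : M, p • x = 0) :
    Nonempty (M ≃+ (Fin d → ZMod p)) := by
  haveI : Fact p.Prime := ⟨hp⟩
  haveI : NeZero p := ⟨hp.ne_zero⟩
  letI inst : Module (ZMod p) M := AddCommGroup.zmodModule hel
  haveI hfin : Module.Finite (ZMod p) M := Module.Finite.of_finite (R := ZMod p) (M := M)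
  haveI hfree : Module.Free (ZMod p) M := Module.Free.of_divisionRing (ZMod p) M
  cases nonempty_fintype M
  have hc : Fintype.card M = Fintype.card (ZMod p) ^ Module.finrank (ZMod p) M :=
    Module.card_eq_pow_finrank
  rw [ZMod.card] at hc
  have hd : Module.finrank (ZMod p) M = d := by
    have : p ^ d = p ^ Module.finrank (ZMod p) M := by
      rw [← hcard, Nat.card_eq_fintype_card, hc]
    exact (Nat.pow_right_injective hp.two_le this).symm
  have b := @Module.finBasisOfFinrankEq (ZMod p) M _ _ _ hfree _ hfin d hd
  exact ⟨b.equivFun.toAddEquiv⟩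

lemma zmodTor (p m : ℕ) (hp : p.Prime) (hm : m = p ∨ m = p ^ 2) :
    Nat.card {a : ZMod m // p • a = 0} = p := by
  have hm0 : m ≠ 0 := by
    rcases hm with h | h <;> rw [h]
    · exact hp.ne_zero
    · exact pow_ne_zero 2 hp.ne_zero
  haveI : NeZero m := ⟨hm0⟩
  set φ : AddMonoid.End (ZMod m) := (p : AddMonoid.End (ZMod m)) with hφ
  have hφa : ∀ a, φ a = p • a := fun a => rfl
  have h1 : Nat.card {a : ZMod m // p • a = 0} = Nat.card φ.ker := by
    apply Nat.card_congr
    exact Equiv.subtypeEquivRight fun a => by show p • a = 0 ↔ φ a = 0; rw [hφa]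
  have hrange : φ.range = AddSubgroup.zmultiples ((p : ℕ) : ZMod m) := by
    ext b
    constructor
    · rintro ⟨a, rfl⟩
      obtain ⟨k, rfl⟩ := ZMod.intCast_surjective a
      refine ⟨k, ?_⟩
      show k • ((p : ℕ) : ZMod m) = φ (k : ZMod m)
      rw [hφa, zsmul_eq_mul, nsmul_eq_mul]
      push_cast
      ring
    · rintro ⟨k, rfl⟩
      refine ⟨(k : ZMod m), ?_⟩
      show φ (k : ZMod m) = k • ((p : ℕ) : ZMod m)
      rw [hφa, zsmul_eq_mul, nsmul_eq_mul]
      push_cast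
      ring
  have hrangecard : Nat.card φ.range = m / p := by
    rw [hrange, Nat.card_zmultiples, ZMod.addOrderOf_coe p hm0]
    congr 1
    rcases hm with h | h <;> rw [h]
    · exact Nat.gcd_self p
    · rw [Nat.gcd_comm]
      exact Nat.gcd_eq_left (dvd_pow_self p two_ne_zero)
  have hcards := AddSubgroup.card_eq_card_quotient_mul_card_addSubgroup φ.ker
  have hquot : Nat.card (ZMod m ⧸ φ.ker) = Nat.card φ.range :=
    Nat.card_congr (QuotientAddGroup.quotientKerEquivRange φ).toEquiv
  rw [Nat.card_zmod, hquot, hrangecard] at hcards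
  rw [h1]
  rcases hm with h | h
  · subst h
    rw [Nat.div_self hp.pos, one_mul] at hcards
    exact hcards.symm
  · subst h
    have h2 : p ^ 2 / p = p := by
      rw [pow_two, Nat.mul_div_cancel_left _ hp.pos]
    rw [h2] at hcards
    exact Nat.eq_of_mul_eq_mul_left hp.pos (hcards.symm.trans (pow_two p))

lemma caseTwo {M : Type*} [AddCommGroup M] [Finite M] (p : ℕ) (hp : p.Prime)
    (hcard : Nat.card M = p ^ p)
    (htor : p ^ (p - 1) ≤ Nat.card {x : M // p • x = 0})
    (hexp : ∀ x : M, p ^ 2 • x = 0)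
    (x0 : M) (hx0 : p • x0 ≠ 0) :
    Nonempty (M ≃+ (ZMod (p ^ 2) × (Fin (p - 2) → ZMod p))) := by
  classical
  obtain ⟨ι, hι, n, hn1, ⟨e0⟩⟩ := AddCommGroup.equiv_directSum_zmod_of_finite' M
  haveI := hι
  let e' : M ≃+ (Π i, ZMod (n i)) :=
    e0.trans (DirectSum.linearEquivFunOnFintype ℤ ι (fun i => ZMod (n i))).toAddEquiv
  have hPexp : ∀ y : Π i, ZMod (n i), p ^ 2 • y = 0 := by
    intro y
    have : y = e' (e'.symm y) := (e'.apply_symm_apply y).symm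
    rw [this, ← map_nsmul, hexp, map_zero]
  have hdvd : ∀ i, n i ∣ p ^ 2 := by
    intro i
    have h1 : p ^ 2 • (Pi.single i (1 : ZMod (n i))) = 0 := hPexp _
    have h2 : p ^ 2 • (1 : ZMod (n i)) = 0 := by
      have := congrFun h1 i
      simpa [Pi.smul_apply, Pi.single_eq_same] using this
    have h3 := addOrderOf_dvd_of_nsmul_eq_zero h2
    rwa [ZMod.addOrderOf_one] at h3
  have hcase : ∀ i, n i = p ∨ n i = p ^ 2 := by
    intro i
    obtain ⟨e, he2, heq⟩ := (Nat.dvd_prime_pow hp).mp (hdvd i)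
    interval_cases e
    · exfalso; have h := hn1 i; rw [heq, pow_zero] at h; omega
    · left; rw [heq, pow_one]
    · right; exact heq
  have hcardP : Nat.card M = ∏ i, n i := by
    have h1 : Nat.card M = Nat.card (Π i, ZMod (n i)) := Nat.card_congr e'.toEquiv
    rw [h1, Nat.card_pi]
    exact Finset.prod_congr rfl fun i _ => Nat.card_zmod (n i)
  have hprod : ∏ i, n i = p ^ p := by rw [← hcardP, hcard]
  -- torsion count
  have htorcount : Nat.card {y : Π i, ZMod (n i) // p • y = 0} = p ^ (Fintype.card ι) := by
    have e1 : {y : Π i, ZMod (n i) // p • y = 0} ≃ Π i, {a : ZMod (n i) // p • a = 0} := by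
      refine (Equiv.subtypeEquivRight fun y => ?_).trans Equiv.subtypePiEquivPi
      constructor
      · intro h i; rw [← Pi.smul_apply, h]; rfl
      · intro h; funext i; exact h i
    rw [Nat.card_congr e1, Nat.card_pi]
    have : ∀ i ∈ Finset.univ, Nat.card {a : ZMod (n i) // p • a = 0} = p :=
      fun i _ => zmodTor p (n i) hp (hcase i)
    rw [Finset.prod_congr rfl this, Finset.prod_const, Finset.card_univ]
  have htrans : Nat.card {x : M // p • x = 0}
      = Nat.card {y : Π i, ZMod (n i) // p • y = 0} := by
    apply Nat.card_congr
    refine Equiv.subtypeEquiv e'.toEquiv fun x => ?_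
    constructor
    · intro h; show p • e' x = 0; rw [← map_nsmul, h, map_zero]
    · intro h
      have : e' (p • x) = 0 := by rw [map_nsmul]; exact h
      exact (AddEquiv.map_eq_zero_iff e').mp this
  have hcardι : p - 1 ≤ Fintype.card ι := by
    have := htor
    rw [htrans, htorcount] at this
    exact (Nat.pow_le_pow_iff_right hp.one_lt).mp this
  -- existence of p^2 component
  have hexists : ∃ i, n i = p ^ 2 := by
    by_contra hno
    push_neg at hno
    have hall : ∀ i, n i = p := fun i => (hcase i).resolve_right (hno i)
    have hPel : ∀ y : Π i, ZMod (n i), p • y = 0 := by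
      intro y
      funext i
      show p • y i = 0
      rw [← hall i]
      show n i • y i = 0
      rw [nsmul_eq_mul, ZMod.natCast_self, zero_mul]
    have : e' (p • x0) = 0 := by rw [map_nsmul]; exact hPel _
    exact hx0 ((AddEquiv.map_eq_zero_iff e').mp this)
  obtain ⟨i0, hi0⟩ := hexists
  -- count of p^2 components
  set S : Finset ι := Finset.univ.filter (fun i => n i = p ^ 2) with hS
  have hsum : ∏ i, n i = p ^ (∑ i, (if n i = p ^ 2 then 2 else 1)) := by
    rw [← Finset.prod_pow_eq_pow_sum]
    refine Finset.prod_congr rfl fun i _ => ?_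
    rcases hcase i with h | h
    · rw [if_neg, h, pow_one]
      rw [h]
      intro hc
      have := hp.one_lt
      nlinarith [hp.one_lt]
    · rw [if_pos h, h]
  have hsum2 : (∑ i, (if n i = p ^ 2 then 2 else 1)) = Fintype.card ι + S.card := by
    have : ∀ i : ι, (if n i = p ^ 2 then 2 else 1) = 1 + (if n i = p ^ 2 then 1 else 0) := by
      intro i; split <;> rfl
    rw [Finset.sum_congr rfl fun i _ => this i, Finset.sum_add_distrib]
    simp [hS, Finset.sum_boole, Finset.card_univ]
  have hSp : Fintype.card ι + S.card = p := by
    have := hprod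
    rw [hsum, hsum2] at this
    exact Nat.pow_right_injective hp.two_le this
  have hi0S : i0 ∈ S := by simp [hS, hi0]
  have hS1 : S.card = 1 := by
    have h1 : 1 ≤ S.card := Finset.card_pos.mpr ⟨i0, hi0S⟩
    have h2 := hp.two_le
    omega
  have hcardι' : Fintype.card ι = p - 1 := by omega
  have huniq : ∀ j, n j = p ^ 2 → j = i0 := by
    intro j hj
    by_contra hne
    have : 1 < S.card := Finset.one_lt_card.mpr ⟨j, by simp [hS, hj], i0, hi0S, hne⟩
    omega
  have hj : ∀ j : ι, j ≠ i0 → n j = p := by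
    intro j hjne
    rcases hcase j with h | h
    · exact h
    · exact absurd (huniq j h) hjne
  -- assembling final equivalence
  have hsub : Fintype.card {j : ι // j ≠ i0} = p - 2 := by
    have h1 : Fintype.card {j : ι // ¬ (j = i0)} =
        Fintype.card ι - Fintype.card {j : ι // j = i0} :=
      Fintype.card_subtype_compl _
    have h2 : Fintype.card {j : ι // j = i0} = 1 := Fintype.card_subtype_eq i0
    have h3 := hp.two_le
    simp only [h2] at h1
    have h4 : Fintype.card {j : ι // j ≠ i0} = Fintype.card ι - 1 := h1
    rw [h4, hcardι']
    omega
  let eFin : Fin (p - 2) ≃ {j : ι // j ≠ i0} := (Fintype.equivFinOfCardEq hsub).symm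
  let eIdx : Option (Fin (p - 2)) ≃ ι :=
    (Equiv.optionCongr eFin).trans (Equiv.optionSubtypeNe i0)
  have heNone : eIdx none = i0 := rfl
  have heSome : ∀ j, eIdx (some j) = (eFin j : ι) := fun j => rfl
  let L1 : (Π i, ZMod (n i)) ≃ₗ[ℤ] Π o : Option (Fin (p-2)), ZMod (n (eIdx o)) :=
    (LinearEquiv.piCongrLeft ℤ (fun i => ZMod (n i)) eIdx).symm
  let L2 := LinearEquiv.piOptionEquivProd ℤ (M := fun o => ZMod (n (eIdx o)))
  let A1 : ZMod (n (eIdx none)) ≃+ ZMod (p ^ 2) :=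
    (ZMod.ringEquivCongr (by rw [heNone, hi0])).toAddEquiv
  let A2 : ∀ j : Fin (p - 2), ZMod (n (eIdx (some j))) ≃+ ZMod p := fun j =>
    (ZMod.ringEquivCongr (by rw [heSome j]; exact hj _ (eFin j).2)).toAddEquiv
  exact ⟨e'.trans (L1.toAddEquiv.trans (L2.toAddEquiv.trans
    (AddEquiv.prodCongr A1 (AddEquiv.piCongrRight A2))))⟩

/-- Structure theorem: for `G = ⟨σ⟩` of order `p` acting on a finite abelian `p`-group `M`
with nontrivial norm (`M^ν ≠ 1`), `#M^G = p`, and `n` least with `ker((1-σ)^n) = M`: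
if `n = p` then `M ≅ (ℤ/pℤ)^p` or `M ≅ ℤ/p²ℤ ⊕ (ℤ/pℤ)^{p-2}`. -/
theorem stmt13 {M : Type*} [AddCommGroup M] [Finite M] (p : ℕ) (hp : p.Prime)
    (σ : AddAut M) (hσ : p • σ = 0)
    (hpgrp : ∀ x : M, ∃ j : ℕ, p ^ j • x = 0)
    (hν : ∃ x : M, ∑ i ∈ Finset.range p, (i • σ) x ≠ 0)
    (hM1 : Nat.card (AddMonoidHom.ker (oneSubSigma σ)) = p)
    (n : ℕ) (hn : AddMonoidHom.ker ((oneSubSigma σ) ^ n) = ⊤)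
    (hmin : ∀ m < n, AddMonoidHom.ker ((oneSubSigma σ) ^ m) ≠ ⊤)
    (hnp : n = p) :
    Nonempty (M ≃+ (Fin p → ZMod p)) ∨
      Nonempty (M ≃+ (ZMod (p ^ 2) × (Fin (p - 2) → ZMod p))) := by
  classical
  have hnp' : p = n := hnp.symm
  subst hnp'
  haveI : Fact p.Prime := ⟨hp⟩
  set τ : AddMonoid.End M := oneSubSigma σ with hτ
  -- M is a p-group
  have hpk : ∃ k, Nat.card M = p ^ k := by
    have hpg : IsPGroup p (Multiplicative M) := by
      intro g
      obtain ⟨j, hj⟩ := hpgrp (Multiplicative.toAdd g)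
      refine ⟨j, Multiplicative.toAdd.injective ?_⟩
      simpa using hj
    obtain ⟨k, hk⟩ := IsPGroup.iff_card.mp hpg
    exact ⟨k, by rw [← hk]; exact Nat.card_congr Multiplicative.toAdd⟩
  -- cardinality of M
  have hM1' : Nat.card (AddMonoidHom.ker (τ ^ 1)) = p := by exact hM1
  have hcardM : Nat.card M = p ^ p := by
    refine cardM p p hp τ hpk ?_ hn hmin
    exact hM1
  -- p • x lands in the kernel of τ
  have key : ∀ x : M, p • x ∈ AddMonoidHom.ker τ := key1 p hp σ hσ hn
  -- elements of ker τ are killed by p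
  have hker_p : ∀ y : M, y ∈ AddMonoidHom.ker τ → p • y = 0 := by
    intro y hy
    have h1 : Nat.card (AddMonoidHom.ker τ) • (⟨y, hy⟩ : AddMonoidHom.ker τ) = 0 :=
      card_nsmul_eq_zero'
    rw [hM1] at h1
    have := congrArg (fun z : AddMonoidHom.ker τ => (z : M)) h1
    simpa using this
  have hexp : ∀ x : M, p ^ 2 • x = 0 := by
    intro x
    rw [pow_two, mul_comm, mul_smul]
    exact hker_p _ (key x)
  by_cases hel : ∀ x : M, p • x = 0
  · exact Or.inl (elemAbelian p p hp hcardM hel)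
  · push_neg at hel
    obtain ⟨x0, hx0⟩ := hel
    -- torsion lower bound
    have htor : p ^ (p - 1) ≤ Nat.card {x : M // p • x = 0} := by
      set μ : AddMonoid.End M := (p : AddMonoid.End M) with hμ
      have hμa : ∀ x : M, μ x = p • x := fun x => rfl
      have h1 : Nat.card {x : M // p • x = 0} = Nat.card μ.ker := by
        apply Nat.card_congr
        exact Equiv.subtypeEquivRight fun a => by show p • a = 0 ↔ μ a = 0; rw [hμa]
      have hrange : μ.range ≤ AddMonoidHom.ker τ := by
        rintro - ⟨x, rfl⟩
        show p • x ∈ AddMonoidHom.ker τ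
        exact key x
      have hrle : Nat.card μ.range ≤ p := by
        rw [← hM1]
        exact AddSubgroup.card_le_of_le hrange
      have hcards := AddSubgroup.card_eq_card_quotient_mul_card_addSubgroup μ.ker
      have hquot : Nat.card (M ⧸ μ.ker) = Nat.card μ.range :=
        Nat.card_congr (QuotientAddGroup.quotientKerEquivRange μ).toEquiv
      rw [hcardM, hquot] at hcards
      have hple : 1 ≤ p := hp.one_le
      have hsplit : p ^ p = p * p ^ (p - 1) := by
        rw [← pow_succ']
        congr 1
        omega
      rw [h1]
      have : p * p ^ (p - 1) ≤ p * Nat.card μ.ker := by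
        rw [← hsplit, hcards]
        exact Nat.mul_le_mul_right _ hrle
      exact Nat.le_of_mul_le_mul_left this hp.pos
    exact Or.inr (caseTwo p hp hcardM htor hexp x0 hx0)
end

section
/- Let p be a prime, G = ⟨σ⟩ cyclic of order p, M a finite ℤ_p[G]-module annihilated by the norm ν, with filtration M_i = ker((1-σ)^i). For k ≥ 1 let R_k denote the p^k-rank of M (the 𝔽_p-dimension of M^{p^{k-1}}/M^{p^k}). Then p^{R_k} = ∏_{i=(k-1)(p-1)}^{k(p-1)-1} #(M_{i+1}/M_i). -/
namespace Stmt14Aux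

open Finset Polynomial

lemma card_quot_mul {M : Type*} [AddCommGroup M] [Finite M] {H K : AddSubgroup M} (h : H ≤ K) :
    Nat.card (K ⧸ H.addSubgroupOf K) * Nat.card H = Nat.card K := by
  rw [← Nat.card_congr (AddSubgroup.addSubgroupOfEquivOfLe h).toEquiv]
  exact (AddSubgroup.card_eq_card_quotient_mul_card_addSubgroup _).symm

lemma card_range_mul_card_ker {M : Type*} [AddCommGroup M] [Finite M] (f : AddMonoid.End M) :
    Nat.card f.range * Nat.card f.ker = Nat.card M := by
  rw [← Nat.card_congr (QuotientAddGroup.quotientKerEquivRange (f : M →+ M)).toEquiv]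
  exact (AddSubgroup.card_eq_card_quotient_mul_card_addSubgroup _).symm

lemma telescope (Q c : ℕ → ℕ) (hQ : ∀ i, Q i * c i = c (i + 1)) :
    ∀ a b : ℕ, a ≤ b → (∏ i ∈ Finset.Ico a b, Q i) * c a = c b := by
  intro a b hab
  induction b with
  | zero => simp [Nat.le_zero.mp hab]
  | succ n ih =>
    rcases Nat.lt_or_ge a (n + 1) with h | h
    · have h' : a ≤ n := Nat.lt_succ_iff.mp h
      rw [Finset.prod_Ico_succ_top h', mul_comm (∏ i ∈ Finset.Ico a n, Q i) (Q n),
        mul_assoc, ih h', hQ]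
    · have : a = n + 1 := le_antisymm hab h
      simp [this]

lemma poly_id (p : ℕ) :
    (∑ i ∈ Finset.range p, (X : ℤ[X]) ^ i) =
      ∑ j ∈ Finset.range p, (p.choose (j + 1) : ℤ[X]) * (X - 1) ^ j := by
  have hX : (X : ℤ[X]) - 1 ≠ 0 := by
    intro h
    have := congrArg (Polynomial.eval 2) h
    simp at this
  apply mul_left_cancel₀ hX
  rw [mul_geom_sum]
  have hpow : (X : ℤ[X]) ^ p
      = ∑ k ∈ Finset.range (p + 1), (X - 1) ^ k * 1 ^ (p - k) * (p.choose k : ℤ[X]) := by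
    conv_lhs => rw [show (X : ℤ[X]) = (X - 1) + 1 by ring, add_pow]
  rw [hpow, Finset.sum_range_succ']
  simp only [one_pow, mul_one, pow_zero, one_mul, Nat.choose_zero_right, Nat.cast_one]
  rw [Finset.mul_sum]
  rw [add_sub_cancel_right]
  apply Finset.sum_congr rfl
  intro j _
  ring

variable {M : Type*} [AddCommGroup M]

/-- The automorphism `σ` as an additive monoid endomorphism. -/
def sEnd (σ : AddAut M) : AddMonoid.End M := AddEquiv.toAddMonoidHom σ

lemma end_mul_apply (f g : AddMonoid.End M) (x : M) : (f * g) x = f (g x) := rfl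

lemma s_pow_apply (σ : AddAut M) (i : ℕ) (x : M) : ((sEnd σ) ^ i) x = (i • σ) x := by
  induction i with
  | zero => rfl
  | succ n ih =>
    rw [pow_succ', succ_nsmul' (M := AddAut M)]
    show (sEnd σ) ((sEnd σ ^ n) x) = σ ((n • σ) x)
    rw [ih]; rfl

lemma sum_choose_eq_zero (σ : AddAut M) (p : ℕ)
    (hν : ∀ x : M, ∑ i ∈ Finset.range p, (i • σ) x = 0) :
    ∑ j ∈ Finset.range p, (p.choose (j + 1) : AddMonoid.End M) * ((sEnd σ) - 1) ^ j = 0 := by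
  have h := congrArg (Polynomial.aeval (R := ℤ) (sEnd σ)) (poly_id p)
  simp only [map_sum, map_pow, map_mul, map_natCast, map_sub, map_one, Polynomial.aeval_X] at h
  rw [← h]
  refine DFunLike.ext _ _ fun x => ?_
  have : (∑ i ∈ Finset.range p, (sEnd σ) ^ i) x = ∑ i ∈ Finset.range p, ((sEnd σ) ^ i) x :=
    AddMonoidHom.finset_sum_apply _ _ _
  rw [AddMonoid.End.zero_apply, this]
  simp_rw [s_pow_apply]
  exact hν x

lemma ker_pow_iff [Finite M] (σ : AddAut M) (p : ℕ) (hp : p.Prime)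
    (hpgrp : ∀ x : M, ∃ j : ℕ, p ^ j • x = 0)
    (hν : ∀ x : M, ∑ i ∈ Finset.range p, (i • σ) x = 0)
    (m : ℕ) (x : M) :
    ((((sEnd σ) - 1) ^ ((p - 1) * m)) x = 0) ↔ p ^ m • x = 0 := by
  set R := AddMonoid.End M
  set D : R := (sEnd σ) - 1 with hDdef
  have hp1 : p - 1 + 1 = p := Nat.succ_pred_eq_of_pos hp.pos
  have h0 : (∑ j ∈ Finset.range (p - 1), (p.choose (j + 1) : R) * D ^ j) + D ^ (p - 1) = 0 := by
    have := sum_choose_eq_zero σ p hν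
    rw [← hp1, Finset.sum_range_succ] at this
    rwa [hp1, Nat.choose_self, Nat.cast_one, one_mul] at this
  set c : ℕ → ℕ := fun j => p.choose (j + 1) / p with hcdef
  have hc : ∀ j, j < p - 1 → (p.choose (j + 1) : R) = (p : R) * (c j : R) := by
    intro j hj
    have hdvd : p ∣ p.choose (j + 1) := hp.dvd_choose_self (Nat.succ_ne_zero j)
      (by omega)
    rw [hcdef, ← Nat.cast_mul, Nat.mul_div_cancel' hdvd]
  have hc0 : c 0 = 1 := by
    simp [hcdef, Nat.choose_one_right, Nat.div_self hp.pos]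
  set h : R := ∑ i ∈ Finset.range (p - 2), (c (i + 1) : R) * D ^ i with hhdef
  set N : R := D * h with hNdef
  have hg : (∑ j ∈ Finset.range (p - 1), (c j : R) * D ^ j) = N + 1 := by
    have hp2 : p - 2 + 1 = p - 1 := by have := hp.two_le; omega
    rw [← hp2, Finset.sum_range_succ']
    simp only [hc0, Nat.cast_one, pow_zero, one_mul]
    congr 1
    rw [hNdef, hhdef, Finset.mul_sum]
    refine Finset.sum_congr rfl fun i _ => ?_
    rw [pow_succ' D i, ← mul_assoc, ← mul_assoc, (Nat.cast_commute (c (i + 1)) D).eq]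
  have hsum_eq : (∑ j ∈ Finset.range (p - 1), (p.choose (j + 1) : R) * D ^ j)
      = (p : R) * (N + 1) := by
    rw [← hg, Finset.mul_sum]
    refine Finset.sum_congr rfl fun j hj => ?_
    rw [hc j (Finset.mem_range.mp hj), mul_assoc]
  have hpg : (p : R) * (N + 1) = -(D ^ (p - 1)) := by
    rw [← hsum_eq]
    exact eq_neg_of_add_eq_zero_left h0
  have hD1 : D ^ (p - 1) = -((p : R) * (N + 1)) := by rw [hpg, neg_neg]
  obtain ⟨J, hJ⟩ : ∃ J : ℕ, ∀ y : M, p ^ J • y = 0 := by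
    cases nonempty_fintype M
    refine ⟨Finset.univ.sup fun y => (hpgrp y).choose, fun y => ?_⟩
    have hle : (hpgrp y).choose ≤ Finset.univ.sup fun y => (hpgrp y).choose :=
      Finset.le_sup (f := fun y => (hpgrp y).choose) (Finset.mem_univ y)
    rw [← Nat.sub_add_cancel hle, pow_add, mul_smul, (hpgrp y).choose_spec, smul_zero]
  have hDh : Commute D h := by
    rw [hhdef]
    refine Commute.sum_right _ _ _ fun i _ => ?_
    exact ((Nat.cast_commute (c (i + 1)) D).symm).mul_right ((Commute.refl D).pow_right i)
  have hDN : Commute D N := (Commute.refl D).mul_right hDh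
  have hDnil : D ^ ((p - 1) * J) = 0 := by
    have h1 : D ^ ((p - 1) * J) = (-1 : R) ^ J * ((p : R) ^ J * (N + 1) ^ J) := by
      rw [pow_mul, hD1, neg_pow, (Nat.cast_commute p (N + 1)).mul_pow]
    refine DFunLike.ext _ _ fun y => ?_
    rw [h1, end_mul_apply, end_mul_apply]
    have h2 : ((p : R) ^ J) (((N + 1) ^ J) y) = p ^ J • (((N + 1) ^ J) y) := by
      rw [← Nat.cast_pow]; rfl
    rw [h2, hJ, map_zero, AddMonoid.End.zero_apply]
  have hNnil : N ^ ((p - 1) * J) = 0 := by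
    rw [hNdef, hDh.mul_pow, hDnil, zero_mul]
  set E : R := ∑ i ∈ Finset.range ((p - 1) * J), (-N) ^ i with hEdef
  have hNE : Commute N E := by
    rw [hEdef]
    exact Commute.sum_right _ _ _ fun i _ => ((Commute.refl N).neg_right).pow_right i
  have hDE : Commute D E := by
    rw [hEdef]
    exact Commute.sum_right _ _ _ fun i _ => ((hDN.neg_right).pow_right i)
  have hE : E * (N + 1) = 1 := by
    have h3 : E * (-N - 1) = (-N) ^ ((p - 1) * J) - 1 := geom_sum_mul (-N) _
    rw [neg_pow, hNnil, mul_zero, zero_sub] at h3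
    have h4 : N + 1 = -(-N - 1) := by rw [neg_sub, sub_neg_eq_add, add_comm]
    rw [h4, mul_neg, h3, neg_neg]
  have hE' : (N + 1) * E = 1 := by
    rw [(Commute.add_left hNE (Commute.one_left E)).eq, hE]
  have hpE : (p : R) = -(D ^ (p - 1)) * E := by
    calc (p : R) = (p : R) * ((N + 1) * E) := by rw [hE', mul_one]
    _ = ((p : R) * (N + 1)) * E := by rw [mul_assoc]
    _ = -(D ^ (p - 1)) * E := by rw [hpg]
  constructor
  · intro hx
    have h5 : (p : R) ^ m = (-1 : R) ^ m * (E ^ m * D ^ ((p - 1) * m)) := by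
      rw [hpE, neg_mul, neg_pow, (hDE.pow_left (p - 1)).mul_pow,
        ((hDE.pow_left (p - 1)).pow_pow m m).eq, pow_mul]
    have h6 : p ^ m • x = ((p : R) ^ m) x := by rw [← Nat.cast_pow]; rfl
    rw [h6, h5, end_mul_apply, end_mul_apply, hx, map_zero, map_zero]
  · intro hx
    have h7 : D ^ ((p - 1) * m) = (-1 : R) ^ m * ((N + 1) ^ m * (p : R) ^ m) := by
      rw [pow_mul, hD1, neg_pow, (Nat.cast_commute p (N + 1)).mul_pow,
        ((Nat.cast_commute p (N + 1)).pow_pow m m).eq]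
    have h6 : ((p : R) ^ m) x = p ^ m • x := by rw [← Nat.cast_pow]; rfl
    rw [h7, end_mul_apply, end_mul_apply, h6, hx, map_zero, map_zero]

end Stmt14Aux

open Stmt14Aux in
/-- For `G = ⟨σ⟩` of order `p` acting on a finite abelian `p`-group `M` annihilated by
the norm `ν`: with `M_i = ker((1-σ)^i)`, the `p^k`-rank `R_k` of `M` satisfies
`p^{R_k} = #(M^{p^{k-1}}/M^{p^k}) = ∏_{i=(k-1)(p-1)}^{k(p-1)-1} #(M_{i+1}/M_i)`. -/
theorem stmt14 {M : Type*} [AddCommGroup M] [Finite M] (p : ℕ) (hp : p.Prime)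
    (σ : AddAut M) (hσ : p • σ = 0)
    (hpgrp : ∀ x : M, ∃ j : ℕ, p ^ j • x = 0)
    (hν : ∀ x : M, ∑ i ∈ Finset.range p, (i • σ) x = 0)
    (k : ℕ) (hk : 1 ≤ k) :
    Nat.card (↥(Ppow (⊤ : AddSubgroup M) (p ^ (k - 1))) ⧸
        (Ppow (⊤ : AddSubgroup M) (p ^ k)).addSubgroupOf
          (Ppow (⊤ : AddSubgroup M) (p ^ (k - 1)))) =
      ∏ i ∈ Finset.Ico ((k - 1) * (p - 1)) (k * (p - 1)),
        Nat.card (↥(AddMonoidHom.ker ((oneSubSigma σ) ^ (i + 1))) ⧸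
          (AddMonoidHom.ker ((oneSubSigma σ) ^ i)).addSubgroupOf
            (AddMonoidHom.ker ((oneSubSigma σ) ^ (i + 1)))) := by
  classical
  set R := AddMonoid.End M
  have hone : oneSubSigma σ = -((sEnd σ) - 1) := by
    rw [neg_sub]; rfl
  set D : R := (sEnd σ) - 1 with hDdef
  -- kernels of powers of `oneSubSigma` and of `D` agree
  have hkerneg : ∀ i : ℕ, AddMonoidHom.ker ((oneSubSigma σ) ^ i) = AddMonoidHom.ker (D ^ i) := by
    intro i
    ext y
    change ((oneSubSigma σ ^ i) y = 0) ↔ ((D ^ i) y = 0)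
    rw [hone, neg_pow, end_mul_apply]
    rcases Nat.even_or_odd i with hi | hi
    · rw [hi.neg_one_pow, AddMonoid.End.one_apply]
    · rw [hi.neg_one_pow]
      rw [show ((-1 : R)) ((D ^ i) y) = -((D ^ i) y) from rfl, neg_eq_zero]
  -- kernels of `D`-powers are `p`-power torsion kernels
  have hkerp : ∀ j : ℕ, AddMonoidHom.ker (D ^ ((p - 1) * j))
      = AddMonoidHom.ker (((p ^ j : ℕ) : R)) := by
    intro j
    ext y
    change (D ^ ((p - 1) * j)) y = 0 ↔ (((p ^ j : ℕ) : R)) y = 0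
    rw [AddMonoid.End.natCast_apply]
    exact ker_pow_iff σ p hp hpgrp hν j y
  -- Ppow as a range
  have hPpow : ∀ q : ℕ, Ppow (⊤ : AddSubgroup M) q = AddMonoidHom.range ((q : R)) := by
    intro q
    rw [Ppow]; exact (AddMonoidHom.range_eq_map _).symm
  set f1 : R := ((p ^ (k - 1) : ℕ) : R) with hf1
  set f2 : R := ((p ^ k : ℕ) : R) with hf2
  have hBA : Ppow (⊤ : AddSubgroup M) (p ^ k) ≤ Ppow (⊤ : AddSubgroup M) (p ^ (k - 1)) := by
    rw [hPpow, hPpow]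
    rintro y ⟨z, rfl⟩
    have hk1 : p ^ (k - 1) * p = p ^ k := by rw [← pow_succ, Nat.sub_add_cancel hk]
    refine ⟨p • z, ?_⟩
    show p ^ (k - 1) • (p • z) = p ^ k • z
    rw [smul_smul, hk1]
  have hker_le : ∀ i : ℕ, AddMonoidHom.ker ((oneSubSigma σ) ^ i)
      ≤ AddMonoidHom.ker ((oneSubSigma σ) ^ (i + 1)) := by
    intro i y hy
    change (oneSubSigma σ ^ i) y = 0 at hy
    change (oneSubSigma σ ^ (i + 1)) y = 0
    rw [pow_succ', end_mul_apply, hy, map_zero]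
  -- cardinality bookkeeping
  have hcard1 : Nat.card (↥(Ppow (⊤ : AddSubgroup M) (p ^ (k - 1))) ⧸
        (Ppow (⊤ : AddSubgroup M) (p ^ k)).addSubgroupOf
          (Ppow (⊤ : AddSubgroup M) (p ^ (k - 1))))
      * Nat.card (Ppow (⊤ : AddSubgroup M) (p ^ k))
      = Nat.card (Ppow (⊤ : AddSubgroup M) (p ^ (k - 1))) := card_quot_mul hBA
  have hA : Nat.card (Ppow (⊤ : AddSubgroup M) (p ^ (k - 1)))
      * Nat.card (AddMonoidHom.ker f1) = Nat.card M := by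
    rw [hPpow]
    exact card_range_mul_card_ker f1
  have hB : Nat.card (Ppow (⊤ : AddSubgroup M) (p ^ k))
      * Nat.card (AddMonoidHom.ker f2) = Nat.card M := by
    rw [hPpow]
    exact card_range_mul_card_ker f2
  set Q : ℕ → ℕ := fun i => Nat.card (↥(AddMonoidHom.ker ((oneSubSigma σ) ^ (i + 1))) ⧸
          (AddMonoidHom.ker ((oneSubSigma σ) ^ i)).addSubgroupOf
            (AddMonoidHom.ker ((oneSubSigma σ) ^ (i + 1)))) with hQ
  set c : ℕ → ℕ := fun i => Nat.card (AddMonoidHom.ker ((oneSubSigma σ) ^ i)) with hc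
  have hQc : ∀ i, Q i * c i = c (i + 1) := fun i => card_quot_mul (hker_le i)
  have htel := telescope Q c hQc ((k - 1) * (p - 1)) (k * (p - 1))
    (Nat.mul_le_mul_right _ (Nat.sub_le k 1))
  have hca : c ((k - 1) * (p - 1)) = Nat.card (AddMonoidHom.ker f1) := by
    show Nat.card (AddMonoidHom.ker ((oneSubSigma σ) ^ ((k - 1) * (p - 1)))) = _
    rw [hkerneg, show (k - 1) * (p - 1) = (p - 1) * (k - 1) from Nat.mul_comm _ _, hkerp]
  have hcb : c (k * (p - 1)) = Nat.card (AddMonoidHom.ker f2) := by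
    show Nat.card (AddMonoidHom.ker ((oneSubSigma σ) ^ (k * (p - 1)))) = _
    rw [hkerneg, show k * (p - 1) = (p - 1) * k from Nat.mul_comm _ _, hkerp]
  rw [hca, hcb] at htel
  have hposM : 0 < Nat.card M := Nat.card_pos
  refine Nat.eq_of_mul_eq_mul_right hposM ?_
  calc Nat.card (↥(Ppow (⊤ : AddSubgroup M) (p ^ (k - 1))) ⧸
        (Ppow (⊤ : AddSubgroup M) (p ^ k)).addSubgroupOf
          (Ppow (⊤ : AddSubgroup M) (p ^ (k - 1)))) * Nat.card M
      = Nat.card (↥(Ppow (⊤ : AddSubgroup M) (p ^ (k - 1))) ⧸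
        (Ppow (⊤ : AddSubgroup M) (p ^ k)).addSubgroupOf
          (Ppow (⊤ : AddSubgroup M) (p ^ (k - 1))))
        * (Nat.card (Ppow (⊤ : AddSubgroup M) (p ^ k)) * Nat.card (AddMonoidHom.ker f2)) := by
        rw [hB]
    _ = (Nat.card (↥(Ppow (⊤ : AddSubgroup M) (p ^ (k - 1))) ⧸
        (Ppow (⊤ : AddSubgroup M) (p ^ k)).addSubgroupOf
          (Ppow (⊤ : AddSubgroup M) (p ^ (k - 1))))
        * Nat.card (Ppow (⊤ : AddSubgroup M) (p ^ k))) * Nat.card (AddMonoidHom.ker f2) := by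
        ring
    _ = Nat.card (Ppow (⊤ : AddSubgroup M) (p ^ (k - 1))) * Nat.card (AddMonoidHom.ker f2) := by
        rw [hcard1]
    _ = Nat.card (Ppow (⊤ : AddSubgroup M) (p ^ (k - 1)))
        * ((∏ i ∈ Finset.Ico ((k - 1) * (p - 1)) (k * (p - 1)), Q i)
          * Nat.card (AddMonoidHom.ker f1)) := by rw [htel]
    _ = (∏ i ∈ Finset.Ico ((k - 1) * (p - 1)) (k * (p - 1)), Q i)
        * (Nat.card (Ppow (⊤ : AddSubgroup M) (p ^ (k - 1)))
          * Nat.card (AddMonoidHom.ker f1)) := by ring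
    _ = (∏ i ∈ Finset.Ico ((k - 1) * (p - 1)) (k * (p - 1)), Q i) * Nat.card M := by rw [hA]
end

section
/- Let p be a prime, G = ⟨σ⟩ cyclic of order p, and M a finite ℤ_p[G]-module such that #M^G = p, M^ν ≠ 1, and the least n with ker((1-σ)^n) = M satisfies n > p. Then the p-rank of M equals the p-rank of M_{n-1} = (1-σ)M, which equals p-1. -/
section Helpers

variable {M : Type*} [AddCommGroup M] [Finite M]

lemma yy_eq_of_le_of_card_le {H K : AddSubgroup M} (h : H ≤ K)
    (hc : Nat.card K ≤ Nat.card H) : H = K := by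
  have h1 : (H : Set M) = (K : Set M) := by
    refine Set.eq_of_subset_of_ncard_le h ?_ (Set.toFinite _)
    rw [← Nat.card_coe_set_eq, ← Nat.card_coe_set_eq]
    simpa using hc
  exact SetLike.coe_injective h1

lemma yy_card_lt_of_lt {H K : AddSubgroup M} (h : H < K) :
    Nat.card H < Nat.card K := by
  refine lt_of_le_of_ne (AddSubgroup.card_le_of_le h.le) fun hc => h.ne ?_
  exact yy_eq_of_le_of_card_le h.le hc.ge

lemma yy_card_range_mul_card_ker (φ : M →+ M) :
    Nat.card φ.range * Nat.card φ.ker = Nat.card M := by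
  rw [← Nat.card_congr (QuotientAddGroup.quotientKerEquivRange φ).toEquiv]
  exact (AddSubgroup.card_eq_card_quotient_mul_card_addSubgroup φ.ker).symm

/-- The key polynomial identity: `Φ_p(X) = (1-X)^(p-1) + p(1 - (1-X)d(X))`. -/
lemma yy_poly (p : ℕ) (hp : p.Prime) :
    ∃ d : Polynomial ℤ, (∑ k ∈ Finset.range p, (Polynomial.X : Polynomial ℤ) ^ k)
      = (1 - Polynomial.X) ^ (p - 1)
        + Polynomial.C (p : ℤ) * (1 - (1 - Polynomial.X) * d) := by
  haveI : Fact p.Prime := ⟨hp⟩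
  set q : Polynomial ℤ :=
    (∑ k ∈ Finset.range p, Polynomial.X ^ k) - (1 - Polynomial.X) ^ (p - 1) with hq
  have hXne : (1 - Polynomial.X : Polynomial (ZMod p)) ≠ 0 := by
    intro h
    have := congrArg (fun f => Polynomial.coeff f 1) h
    simp [Polynomial.coeff_one, Polynomial.coeff_X_one] at this
  have hgeom : (∑ k ∈ Finset.range p, (Polynomial.X : Polynomial (ZMod p)) ^ k)
      * (1 - Polynomial.X) = 1 - Polynomial.X ^ p := by
    have h0 := geom_sum_mul (Polynomial.X : Polynomial (ZMod p)) p
    linear_combination -h0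
  have hfrob : ((1 : Polynomial (ZMod p)) - Polynomial.X) ^ p = 1 - Polynomial.X ^ p := by
    rw [sub_pow_char]; simp
  have h3 : ((1 : Polynomial (ZMod p)) - Polynomial.X) ^ (p - 1)
      = ∑ k ∈ Finset.range p, Polynomial.X ^ k := by
    apply mul_right_cancel₀ hXne
    rw [← pow_succ, Nat.sub_add_cancel hp.one_lt.le, hfrob, hgeom]
  have hmap : q.map (Int.castRingHom (ZMod p)) = 0 := by
    rw [hq]
    simp only [Polynomial.map_sub, Polynomial.map_pow, Polynomial.map_one, Polynomial.map_X,
      Polynomial.map_sum]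
    rw [← h3, sub_self]
  have hdvd : Polynomial.C (p : ℤ) ∣ q := by
    rw [Polynomial.C_dvd_iff_dvd_coeff]
    intro i
    have h5 : (Int.castRingHom (ZMod p)) (q.coeff i) = 0 := by
      rw [← Polynomial.coeff_map, hmap, Polynomial.coeff_zero]
    have h6 : ((q.coeff i : ℤ) : ZMod p) = 0 := h5
    exact_mod_cast (ZMod.intCast_zmod_eq_zero_iff_dvd _ _).mp h6
  obtain ⟨c, hc⟩ := hdvd
  have he : q.eval 1 = p := by
    rw [hq]
    simp [Polynomial.eval_finset_sum, zero_pow (Nat.sub_ne_zero_of_lt hp.one_lt)]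
  have hc1 : c.eval 1 = 1 := by
    have h7 := congrArg (Polynomial.eval 1) hc
    rw [he] at h7
    simp only [Polynomial.eval_mul, Polynomial.eval_C] at h7
    have hpne : (p : ℤ) ≠ 0 := Int.natCast_ne_zero.mpr hp.ne_zero
    have h8 : (p:ℤ) * c.eval 1 = p * 1 := by linarith
    exact mul_left_cancel₀ hpne h8
  have hroot : (Polynomial.X - Polynomial.C (1 : ℤ)) ∣ (c - 1) :=
    Polynomial.dvd_iff_isRoot.mpr (by simp [Polynomial.IsRoot, hc1])
  obtain ⟨e, he2⟩ := hroot
  rw [Polynomial.C_1] at he2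
  refine ⟨e, ?_⟩
  have hqdef : (∑ k ∈ Finset.range p, (Polynomial.X : Polynomial ℤ) ^ k)
      - (1 - Polynomial.X) ^ (p - 1) = Polynomial.C (p : ℤ) * c := by rw [← hq, hc]
  linear_combination hqdef + Polynomial.C ((p : ℕ) : ℤ) * he2

end Helpers

/-- For `G = ⟨σ⟩` of order `p` acting on a finite abelian `p`-group `M`, with
`#M^G = p`, nontrivial norm (`M^ν ≠ 1`), and `n` least with `ker((1-σ)^n) = M`
satisfying `n > p`: the `p`-rank of `M` equals the `p`-rank of
`M_{n-1} = ker((1-σ)^{n-1}) = (1-σ)M`, and both equal `p - 1`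
(expressed here as `#(N/pN) = p^{p-1}` for `N = M` and `N = M_{n-1}`). -/
theorem stmt19 {M : Type*} [AddCommGroup M] [Finite M] (p : ℕ) (hp : p.Prime)
    (σ : AddAut M) (hσ : p • σ = 0)
    (hpgrp : ∀ x : M, ∃ j : ℕ, p ^ j • x = 0)
    (hν : ∃ x : M, ∑ i ∈ Finset.range p, (i • σ) x ≠ 0)
    (hM1 : Nat.card (AddMonoidHom.ker (oneSubSigma σ)) = p)
    (n : ℕ) (hn : AddMonoidHom.ker ((oneSubSigma σ) ^ n) = ⊤)
    (hmin : ∀ m < n, AddMonoidHom.ker ((oneSubSigma σ) ^ m) ≠ ⊤)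
    (hnp : p < n) :
    Nat.card (M ⧸ Ppow (⊤ : AddSubgroup M) p) = p ^ (p - 1) ∧
    Nat.card (↥(AddMonoidHom.ker ((oneSubSigma σ) ^ (n - 1))) ⧸
        (Ppow (AddMonoidHom.ker ((oneSubSigma σ) ^ (n - 1))) p).addSubgroupOf
          (AddMonoidHom.ker ((oneSubSigma σ) ^ (n - 1)))) = p ^ (p - 1) ∧
    AddMonoidHom.ker ((oneSubSigma σ) ^ (n - 1)) =
      AddMonoidHom.range (oneSubSigma σ) := by
  haveI : Fact p.Prime := ⟨hp⟩
  classical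
  have hp2 : 2 ≤ p := hp.two_le
  set τ : AddMonoid.End M := oneSubSigma σ with hτdef
  set s : AddMonoid.End M := AddEquiv.toAddMonoidHom σ with hs
  have hτ : τ = 1 - s := rfl
  -- a helper for rearranging equalities in `M`
  have hsolve : ∀ T u v : M, (0 : M) = T + (u - v) → u = v - T := by
    intro T u v h
    have h6 : T + u - v = 0 := by
      rw [show T + u - v = T + (u - v) from by abel, ← h]
    have h7 : T + u = v := sub_eq_zero.mp h6
    exact eq_sub_of_add_eq (by rw [add_comm]; exact h7)
  -- basic facts about s
  have hspow : ∀ (i : ℕ) (x : M), (s ^ i) x = (i • σ) x := by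
    intro i
    induction i with
    | zero => intro x; rfl
    | succ i ih =>
      intro x
      rw [pow_succ, succ_nsmul]
      have h1 : (s ^ i * s) x = (s ^ i) (s x) := rfl
      have h2 : (i • σ + σ) x = (i • σ) (σ x) := rfl
      rw [h1, h2, ih]
      rfl
  have hsp : s ^ p = 1 := by
    refine AddMonoidHom.ext fun x => ?_
    show (s ^ p) x = x
    rw [hspow, hσ]
    rfl
  -- the norm element
  set N : AddMonoid.End M := ∑ k ∈ Finset.range p, s ^ k with hN
  have hNτ : N * τ = 0 := by
    have h0 := geom_sum_mul s p
    rw [hsp, sub_self] at h0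
    have h1 : N * τ = -(N * (s - 1)) := by rw [hτ]; noncomm_ring
    rw [h1, h0, neg_zero]
  have hτN : τ * N = 0 := by
    have h0 := mul_geom_sum s p
    rw [hsp, sub_self] at h0
    have h1 : τ * N = -((s - 1) * N) := by rw [hτ]; noncomm_ring
    rw [h1, h0, neg_zero]
  -- the key operator identity
  obtain ⟨d, hd⟩ := yy_poly p hp
  set D : AddMonoid.End M := Polynomial.aeval s d with hD
  have hds : D * s = s * D := by
    have h1 : Polynomial.aeval s (d * Polynomial.X) = Polynomial.aeval s (Polynomial.X * d) := by
      rw [mul_comm]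
    simpa only [map_mul, Polynomial.aeval_X] using h1
  have hDτ : D * τ = τ * D := by
    rw [hτ, mul_one_sub, one_sub_mul, hds]
  have hkey : N = τ ^ (p - 1) + (p : AddMonoid.End M) * (1 - τ * D) := by
    have h1 := congrArg (Polynomial.aeval s) hd
    simp only [map_add, map_sum, map_pow, map_sub, map_one, map_mul, Polynomial.aeval_X,
      Polynomial.aeval_C, algebraMap_int_eq, map_natCast] at h1
    rw [hN, hτ]
    exact h1
  have hkey' : ∀ x : M, N x = (τ ^ (p - 1)) x + (p • x - p • (τ (D x))) := by
    intro x
    have h1 := congrArg (fun f : AddMonoid.End M => f x) hkey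
    rw [h1]
    have h2 : ((p : AddMonoid.End M) * (1 - τ * D)) x = p • ((1 - τ * D) x) := rfl
    have h3 : ((1 - τ * D) : AddMonoid.End M) x = x - τ (D x) := rfl
    erw [AddMonoidHom.add_apply, h2, h3, smul_sub]
    rfl
  -- kernels
  set K : ℕ → AddSubgroup M := fun i => AddMonoidHom.ker (τ ^ i) with hKdef
  have hmemK : ∀ (i : ℕ) (x : M), x ∈ K i ↔ (τ ^ i) x = 0 := fun i x => Iff.rfl
  have happly : ∀ (a b : ℕ) (x : M), (τ ^ (a + b)) x = (τ ^ a) ((τ ^ b) x) := by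
    intro a b x
    rw [pow_add]
    rfl
  have hK_mono : ∀ {i j : ℕ}, i ≤ j → K i ≤ K j := by
    intro i j hij x hx
    rw [hmemK] at hx ⊢
    rw [show j = (j - i) + i from by omega, happly, hx, map_zero]
  have hτn : ∀ z : M, (τ ^ n) z = 0 := by
    intro z
    have h1 : z ∈ AddMonoidHom.ker (τ ^ n) := hn.symm ▸ AddSubgroup.mem_top z
    exact h1
  -- M is a p-group
  obtain ⟨k₀, hk₀⟩ : ∃ k, Nat.card M = p ^ k := by
    have hPG : IsPGroup p (Multiplicative M) := by
      intro x
      obtain ⟨j, hj⟩ := hpgrp x.toAdd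
      exact ⟨j, Multiplicative.toAdd.injective (by simpa using hj)⟩
    obtain ⟨k, hk⟩ := IsPGroup.iff_card.mp hPG
    exact ⟨k, by rw [Nat.card_congr Multiplicative.toAdd.symm]; exact hk⟩
  have hppow : ∀ S : AddSubgroup M, ∃ e, Nat.card S = p ^ e := by
    intro S
    have h1 : Nat.card S ∣ p ^ k₀ := hk₀ ▸ AddSubgroup.card_addSubgroup_dvd_card S
    obtain ⟨e, _, he⟩ := (Nat.dvd_prime_pow hp).mp h1
    exact ⟨e, he⟩
  -- cardinalities of the kernels
  have hcard_bound : ∀ i, Nat.card (K (i + 1)) ≤ Nat.card (K i) * p := by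
    intro i
    set φ : K (i + 1) →+ M := (τ ^ i).comp (K (i + 1)).subtype with hφ
    have h1 : Nat.card φ.range * Nat.card φ.ker = Nat.card (K (i + 1)) := by
      rw [← Nat.card_congr (QuotientAddGroup.quotientKerEquivRange φ).toEquiv]
      exact (AddSubgroup.card_eq_card_quotient_mul_card_addSubgroup φ.ker).symm
    have h2 : Nat.card φ.ker ≤ Nat.card (K i) := by
      refine Nat.card_le_card_of_injective
        (fun x => (⟨x.1.1,
          AddMonoidHom.mem_ker.mpr (AddMonoidHom.mem_ker.mp x.2)⟩ : K i)) ?_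
      intro a b hab
      have h7 := congrArg Subtype.val hab
      simp only at h7
      exact Subtype.ext (Subtype.ext h7)
    have h3 : Nat.card φ.range ≤ p := by
      rw [← hM1]
      refine AddSubgroup.card_le_of_le ?_
      rintro y ⟨x, rfl⟩
      refine AddMonoidHom.mem_ker.mpr ?_
      have hx : (τ ^ (i + 1)) x.1 = 0 := x.2
      have h4 : τ ((τ ^ i) x.1) = (τ ^ (i + 1)) x.1 := by rw [pow_succ']; rfl
      show τ ((τ ^ i) x.1) = 0
      rw [h4, hx]
    calc Nat.card (K (i + 1)) = Nat.card φ.range * Nat.card φ.ker := h1.symm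
      _ ≤ p * Nat.card (K i) := Nat.mul_le_mul h3 h2
      _ = Nat.card (K i) * p := Nat.mul_comm _ _
  have hstrict : ∀ i, i < n → K i < K (i + 1) := by
    intro i hi
    refine lt_of_le_of_ne (hK_mono (by omega)) fun heq => ?_
    have hstab : ∀ j, K (i + j) ≤ K i := by
      intro j
      induction j with
      | zero => exact le_refl _
      | succ j ih =>
        intro x hx
        have hτx : τ x ∈ K (i + j) := by
          rw [hmemK]
          have h1 : (τ ^ (i + j + 1)) x = 0 := hx
          rw [← h1, pow_succ]
          rfl
        have h2 : τ x ∈ K i := ih hτx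
        have hx1 : x ∈ K (i + 1) := by
          rw [hmemK, pow_succ]
          exact h2
        rw [← heq] at hx1
        exact hx1
    have h3 : K n ≤ K i := by
      have h4 := hstab (n - i)
      rwa [show i + (n - i) = n from by omega] at h4
    exact hmin i hi (top_le_iff.mp (hn ▸ h3))
  have hK0 : K 0 = ⊥ := by
    ext x
    rw [hmemK, pow_zero, AddSubgroup.mem_bot]
    exact Iff.rfl
  have hKcard : ∀ i, i ≤ n → Nat.card (K i) = p ^ i := by
    intro i
    induction i with
    | zero =>
      intro _
      rw [hK0, pow_zero]
      exact AddSubgroup.card_bot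
    | succ i ih =>
      intro hi
      have h1 : Nat.card (K i) = p ^ i := ih (by omega)
      obtain ⟨e, he⟩ := hppow (K (i + 1))
      have h2 : p ^ i < p ^ e := by
        rw [← h1, ← he]
        exact yy_card_lt_of_lt (hstrict i (by omega))
      have h3 : p ^ e ≤ p ^ (i + 1) := by
        rw [← he, pow_succ]
        exact (hcard_bound i).trans (by rw [h1])
      have h4 : e = i + 1 := by
        have h5 : i < e := (Nat.pow_lt_pow_iff_right hp.one_lt).mp h2
        have h6 : e ≤ i + 1 := (Nat.pow_le_pow_iff_right hp.one_lt).mp h3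
        omega
      rw [he, h4]
  have hMcard : Nat.card M = p ^ n := by
    rw [← AddSubgroup.card_top (G := M), ← hn]
    exact hKcard n le_rfl
  -- ranges
  have hrange : ∀ k, k ≤ n → AddMonoidHom.range (τ ^ k) = K (n - k) := by
    intro k hk
    have hle : AddMonoidHom.range (τ ^ k) ≤ K (n - k) := by
      rintro y ⟨x, rfl⟩
      erw [hmemK, ← happly, show n - k + k = n from by omega]
      exact hτn x
    have hc : Nat.card (K (n - k)) ≤ Nat.card (AddMonoidHom.range (τ ^ k)) := by
      have h1 : Nat.card (AddMonoidHom.range (τ ^ k)) * Nat.card (AddMonoidHom.ker (τ ^ k))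
          = Nat.card M := yy_card_range_mul_card_ker _
      have h2 : Nat.card (AddMonoidHom.ker (τ ^ k)) = p ^ k := hKcard k hk
      have h3 : Nat.card (K (n - k)) = p ^ (n - k) := hKcard _ (by omega)
      rw [h2, hMcard] at h1
      have h4 : Nat.card (AddMonoidHom.range (τ ^ k)) = p ^ (n - k) := by
        refine Nat.eq_of_mul_eq_mul_right (pow_pos hp.pos k) ?_
        rw [h1, ← pow_add]
        congr 1
        omega
      omega
    exact (yy_eq_of_le_of_card_le hle hc).symm ▸ rfl
  have hrange_le : ∀ {k l : ℕ}, k ≤ l →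
      AddMonoidHom.range (τ ^ l) ≤ AddMonoidHom.range (τ ^ k) := by
    intro k l hkl y hy
    obtain ⟨x, hx⟩ := hy
    exact ⟨(τ ^ (l - k)) x, by erw [← happly, show k + (l - k) = l from by omega]; exact hx⟩
  have hr1 : AddMonoidHom.range τ = K (n - 1) := by
    have h1 := hrange 1 (by omega)
    rwa [pow_one] at h1
  -- pointwise consequences of the operator identities
  have hNzero : ∀ x : M, N (τ x) = 0 := by
    intro x
    have h1 := congrArg (fun f : AddMonoid.End M => f x) hNτ
    exact h1
  have hNrange : ∀ x ∈ AddMonoidHom.range τ, N x = 0 := by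
    rintro _ ⟨y, rfl⟩
    exact hNzero y
  have hτNx : ∀ x : M, τ (N x) = 0 := by
    intro x
    have h1 := congrArg (fun f : AddMonoid.End M => f x) hτN
    exact h1
  have hDpow : ∀ (k : ℕ) (x : M), (τ ^ k) (D x) = D ((τ ^ k) x) := by
    intro k
    induction k with
    | zero => intro x; rfl
    | succ k ih =>
      intro x
      have hDτx : ∀ y : M, D (τ y) = τ (D y) := fun y =>
        congrArg (fun f : AddMonoid.End M => f y) hDτ
      calc (τ ^ (k + 1)) (D x) = τ ((τ ^ k) (D x)) := by rw [pow_succ']; rfl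
        _ = τ (D ((τ ^ k) x)) := by rw [ih]
        _ = D (τ ((τ ^ k) x)) := (hDτx _).symm
        _ = D ((τ ^ (k + 1)) x) := by rw [pow_succ']; rfl
  -- K (p-1) is p-torsion
  have htors : ∀ j, j ≤ p - 1 → ∀ x ∈ K j, p • x = 0 := by
    intro j
    induction j with
    | zero =>
      intro _ x hx
      have h1 : x = 0 := by
        have h2 := (hmemK 0 x).mp hx
        rwa [pow_zero] at h2
      rw [h1, smul_zero]
    | succ j ih =>
      intro hj x hx
      have hxr : x ∈ AddMonoidHom.range τ := by
        rw [hr1]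
        exact hK_mono (by omega) hx
      have hNx : N x = 0 := hNrange x hxr
      have hkx := hkey' x
      rw [hNx] at hkx
      have hτp1 : (τ ^ (p - 1)) x = 0 := (hmemK _ _).mp (hK_mono (by omega) hx)
      rw [hτp1, zero_add] at hkx
      have hDx : τ (D x) ∈ K j := by
        rw [hmemK]
        have e1 : (τ ^ j) (τ (D x)) = (τ ^ (j + 1)) (D x) := by rw [pow_succ]; rfl
        have e2 : (τ ^ (j + 1)) (D x) = D ((τ ^ (j + 1)) x) := hDpow _ _
        have e3 : (τ ^ (j + 1)) x = 0 := hx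
        rw [e1, e2, e3, map_zero]
      have hzero : p • (τ (D x)) = 0 := ih (by omega) _ hDx
      rw [hzero, sub_zero] at hkx
      exact hkx.symm
  -- membership in Ppow
  have hPmem : ∀ (S : AddSubgroup M) (y : M), y ∈ Ppow S p ↔ ∃ x ∈ S, p • x = y := by
    intro S y
    show y ∈ AddSubgroup.map _ S ↔ _
    exact Iff.rfl
  -- pM ≤ K (n - p + 1)
  have hpM_le : Ppow ⊤ p ≤ K (n - p + 1) := by
    intro y hy
    obtain ⟨x, -, rfl⟩ := (hPmem ⊤ y).mp hy
    rw [hmemK, map_nsmul]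
    have hx : (τ ^ (n - p + 1)) x ∈ K (p - 1) := by
      have h1 : (τ ^ (n - p + 1)) x ∈ AddMonoidHom.range (τ ^ (n - p + 1)) := ⟨x, rfl⟩
      rw [hrange (n - p + 1) (by omega)] at h1
      rwa [show n - (n - p + 1) = p - 1 from by omega] at h1
    exact htors (p - 1) le_rfl _ hx
  -- K (n - p) ≤ p·K(n-1)
  have hKnp_le : K (n - p) ≤ Ppow (K (n - 1)) p := by
    intro y hy
    have hyr : y ∈ AddMonoidHom.range (τ ^ p) := by
      rw [hrange p (by omega)]
      exact hy
    obtain ⟨m, rfl⟩ := hyr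
    set a : M := τ m with ha
    have hτpm : (τ ^ p) m = (τ ^ (p - 1)) a := by
      rw [show p = (p - 1) + 1 from by omega, pow_succ]
      rfl
    have hNa : N a = 0 := hNzero m
    have hk := hkey' a
    rw [hNa] at hk
    have hpa := hsolve _ _ _ hk
    have h2 : (τ ^ (p - 1)) a = p • (τ (D a)) - p • a := by
      rw [hpa]
      abel
    rw [hPmem]
    refine ⟨τ (D a) - a, ?_, ?_⟩
    · rw [← hr1]
      exact sub_mem ⟨D a, rfl⟩ ⟨m, rfl⟩
    · erw [smul_sub, hτpm, h2]
  -- the iteration: p·K(n-1) ≤ K (n - p)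
  have hiter : ∀ (j : ℕ) (x : M), x ∈ AddMonoidHom.range τ →
      ∃ u ∈ AddMonoidHom.range (τ ^ p), ∃ b ∈ AddMonoidHom.range (τ ^ (j + 1)),
        p • x = u + p • b := by
    intro j
    induction j with
    | zero =>
      intro x hx
      exact ⟨0, zero_mem _, x, by rwa [pow_one], by rw [zero_add]⟩
    | succ j ih =>
      intro x hx
      obtain ⟨u, hu, b, hb, hpx⟩ := ih x hx
      obtain ⟨m, hm⟩ := hb
      have hbr : b ∈ AddMonoidHom.range τ := by
        refine ⟨(τ ^ j) m, ?_⟩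
        rw [← hm, pow_succ']
        rfl
      have hNb : N b = 0 := hNrange b hbr
      have hk := hkey' b
      rw [hNb] at hk
      have h2 := hsolve _ _ _ hk
      refine ⟨u - (τ ^ (p - 1)) b, ?_, τ (D b), ?_, ?_⟩
      · refine sub_mem hu (hrange_le (show p ≤ (p - 1) + (j + 1) from by omega) ⟨m, ?_⟩)
        erw [happly, hm]
      · refine ⟨D m, ?_⟩
        have e1 : (τ ^ (j + 1 + 1)) (D m) = D ((τ ^ (j + 1 + 1)) m) := hDpow _ _
        have e2 : (τ ^ (j + 1 + 1)) m = τ ((τ ^ (j + 1)) m) := by rw [pow_succ']; rfl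
        have e3 : ∀ y : M, D (τ y) = τ (D y) := fun y =>
          congrArg (fun f : AddMonoid.End M => f y) hDτ
        erw [e1, e2, hm, e3]
      · rw [hpx, h2]
        abel
  have hpA_le : Ppow (K (n - 1)) p ≤ K (n - p) := by
    intro y hy
    obtain ⟨x, hxK, rfl⟩ := (hPmem _ _).mp hy
    have hxr : x ∈ AddMonoidHom.range τ := by rw [hr1]; exact hxK
    obtain ⟨u, hu, b, hb, hpx⟩ := hiter (n - 1) x hxr
    have hbz : b = 0 := by
      have h1 : AddMonoidHom.range (τ ^ (n - 1 + 1)) = K 0 := by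
        rw [show n - 1 + 1 = n from by omega, hrange n le_rfl, Nat.sub_self]
      rw [h1, hK0] at hb
      exact hb
    rw [hbz, smul_zero, add_zero] at hpx
    rw [show K (n - p) = AddMonoidHom.range (τ ^ p) from (hrange p (by omega)).symm, hpx]
    exact hu
  have hpA_eq : Ppow (K (n - 1)) p = K (n - p) := le_antisymm hpA_le hKnp_le
  -- pM is not contained in K (n - p)
  have hnotle : ¬ Ppow ⊤ p ≤ K (n - p) := by
    intro hle
    have h1 : K (n - p + 1) ≤ K (n - p) := by
      have h2 : AddMonoidHom.range (τ ^ (p - 1)) ≤ AddMonoidHom.range (τ ^ p) := by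
        rintro y ⟨x, rfl⟩
        have hkx := hkey' x
        have hNxm : N x ∈ K (n - p) := by
          have h3 : N x ∈ K 1 := by
            rw [hmemK, pow_one]
            exact hτNx x
          exact hK_mono (by omega) h3
        have hx1 : p • x ∈ K (n - p) := hle ((hPmem ⊤ _).mpr ⟨x, trivial, rfl⟩)
        have hx2 : p • (τ (D x)) ∈ K (n - p) := hle ((hPmem ⊤ _).mpr ⟨τ (D x), trivial, rfl⟩)
        have h4 : (τ ^ (p - 1)) x ∈ K (n - p) := by
          have he : (τ ^ (p - 1)) x = N x - p • x + p • (τ (D x)) := by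
            rw [hkx]
            abel
          rw [he]
          exact add_mem (sub_mem hNxm hx1) hx2
        rwa [show K (n - p) = AddMonoidHom.range (τ ^ p) from (hrange p (by omega)).symm] at h4
      rw [hrange (p - 1) (by omega), hrange p (by omega)] at h2
      rwa [show n - (p - 1) = n - p + 1 from by omega] at h2
    have hc1 : Nat.card (K (n - p + 1)) ≤ Nat.card (K (n - p)) := AddSubgroup.card_le_of_le h1
    rw [hKcard _ (by omega), hKcard _ (by omega)] at hc1
    have hc2 := Nat.pow_lt_pow_right hp.one_lt (show n - p < n - p + 1 from by omega)
    omega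
  -- the cardinality of pM
  obtain ⟨e, he⟩ := hppow (Ppow ⊤ p)
  have hlow : K (n - p) ≤ Ppow ⊤ p := by
    rw [← hpA_eq]
    exact AddSubgroup.map_mono le_top
  have hstrict2 : K (n - p) < Ppow ⊤ p :=
    lt_of_le_of_ne hlow fun h => hnotle (le_of_eq h.symm)
  have h6 : p ^ (n - p) < p ^ e := by
    rw [← he, ← hKcard (n - p) (by omega)]
    exact yy_card_lt_of_lt hstrict2
  have h7 : p ^ e ≤ p ^ (n - p + 1) := by
    rw [← he, ← hKcard (n - p + 1) (by omega)]
    exact AddSubgroup.card_le_of_le hpM_le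
  have he2 : e = n - p + 1 := by
    have h8 := (Nat.pow_lt_pow_iff_right hp.one_lt).mp h6
    have h9 := (Nat.pow_le_pow_iff_right hp.one_lt).mp h7
    omega
  have hpMcard : Nat.card (Ppow (⊤ : AddSubgroup M) p) = p ^ (n - p + 1) := by rw [he, he2]
  -- assembling the three conclusions
  refine ⟨?_, ?_, ?_⟩
  · have hq1 := AddSubgroup.card_eq_card_quotient_mul_card_addSubgroup
      (Ppow (⊤ : AddSubgroup M) p)
    rw [hMcard, hpMcard] at hq1
    refine Nat.eq_of_mul_eq_mul_right (pow_pos hp.pos (n - p + 1)) ?_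
    rw [← hq1, ← pow_add]
    congr 1
    omega
  · have hAle : Ppow (AddMonoidHom.ker (τ ^ (n - 1))) p ≤ AddMonoidHom.ker (τ ^ (n - 1)) := by
      have h1 : Ppow (K (n - 1)) p ≤ K (n - 1) := by
        rw [hpA_eq]
        exact hK_mono (by omega)
      exact h1
    have hq2 := AddSubgroup.card_eq_card_quotient_mul_card_addSubgroup
      ((Ppow (AddMonoidHom.ker (τ ^ (n - 1))) p).addSubgroupOf
        (AddMonoidHom.ker (τ ^ (n - 1))))
    have hH : Nat.card ((Ppow (AddMonoidHom.ker (τ ^ (n - 1))) p).addSubgroupOf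
        (AddMonoidHom.ker (τ ^ (n - 1)))) = p ^ (n - p) := by
      rw [Nat.card_congr (AddSubgroup.addSubgroupOfEquivOfLe hAle).toEquiv]
      have h2 : Nat.card (Ppow (K (n - 1)) p) = p ^ (n - p) := by
        rw [hpA_eq]
        exact hKcard _ (by omega)
      exact h2
    have hA : Nat.card (AddMonoidHom.ker (τ ^ (n - 1))) = p ^ (n - 1) :=
      hKcard (n - 1) (by omega)
    rw [hA, hH] at hq2
    refine Nat.eq_of_mul_eq_mul_right (pow_pos hp.pos (n - p)) ?_
    rw [← hq2, ← pow_add]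
    congr 1
    omega
  · exact hr1.symm
end
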